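/- arXiv:1807.03327 — 5 statements merged into one kernel-verified Lean document; each statement's English description precedes it below -/
import Mathlib

section
/- If α, β, γ are real numbers with 0 ≤ α ≤ π, 0 ≤ β ≤ π, 0 ≤ γ ≤ π, then ν(α,β,γ) ≤ 0. -/
open Real Filter

noncomputable def Lob (x : ℝ) : ℝ := -∫ t in (0:ℝ)..x, Real.log |2 * Real.sin t|

noncomputable def v8 : ℝ := 8 * Lob (Real.pi / 4)

noncomputable def nu (a b c : ℝ) : ℝ :=
  (1/2) * (Lob ((a+b+c)/2) - Lob ((a+b-c)/2) - Lob ((a-b+c)/2) - Lob ((-a+b+c)/2))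

noncomputable def Ffun (Z t1 t2 t3 t4 t5 t6 : ℝ) : ℝ :=
  Lob (Z - (t1+t2+t3)/2) + Lob (Z - (t1+t5+t6)/2) + Lob (Z - (t2+t4+t6)/2) +
    Lob (Z - (t3+t4+t5)/2) + Lob ((t1+t2+t4+t5)/2 - Z) + Lob ((t1+t3+t4+t6)/2 - Z) +
    Lob ((t2+t3+t5+t6)/2 - Z) - Lob Z

noncomputable def Umax (t1 t2 t3 t4 t5 t6 : ℝ) : ℝ :=
  max (max ((t1+t2+t3)/2) ((t1+t5+t6)/2)) (max ((t2+t4+t6)/2) ((t3+t4+t5)/2))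

noncomputable def Vmin (t1 t2 t3 t4 t5 t6 : ℝ) : ℝ :=
  min (min ((t1+t2+t4+t5)/2) ((t1+t3+t4+t6)/2)) ((t2+t3+t5+t6)/2)

noncomputable def bigV (t1 t2 t3 t4 t5 t6 : ℝ) : ℝ :=
  sSup ((fun Z => Ffun Z t1 t2 t3 t4 t5 t6) ''
      Set.Icc (Umax t1 t2 t3 t4 t5 t6) (min (Vmin t1 t2 t3 t4 t5 t6) (2 * Real.pi))) +
    nu t1 t2 t3 + nu t1 t5 t6 + nu t2 t4 t6 + nu t3 t4 t5


section AuxNuNonpos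

open MeasureTheory intervalIntegral
set_option maxHeartbeats 1000000

noncomputable def Lf (t : ℝ) : ℝ := Real.log |2 * Real.sin t|

lemma Lf_meas : Measurable Lf :=
  Real.measurable_log.comp ((Real.measurable_sin.const_mul 2).abs)

lemma Lf_even (t : ℝ) : Lf (-t) = Lf t := by
  simp [Lf, Real.sin_neg, mul_neg, abs_neg]

lemma Lf_periodic : Function.Periodic Lf Real.pi := by
  intro t; simp [Lf, Real.sin_add_pi, mul_neg, abs_neg]

lemma Lf_int_half : IntervalIntegrable Lf volume 0 (Real.pi/2) := by
  have hpi := Real.pi_pos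
  rw [intervalIntegrable_iff, Set.uIoc_of_le (by positivity)]
  have hbound : IntegrableOn (fun t : ℝ => Real.log 2 + 2 * t ^ (-(1:ℝ)/2)) (Set.Ioc 0 (Real.pi/2)) volume := by
    have h1 : IntervalIntegrable (fun t : ℝ => Real.log 2 + 2 * t ^ (-(1:ℝ)/2)) volume 0 (Real.pi/2) := by
      apply IntervalIntegrable.add
      · exact intervalIntegrable_const
      · exact (intervalIntegrable_rpow' (by norm_num)).const_mul 2
    rw [intervalIntegrable_iff, Set.uIoc_of_le (by positivity)] at h1
    exact h1
  refine Integrable.mono' hbound Lf_meas.aestronglyMeasurable ?_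
  refine (ae_restrict_iff' measurableSet_Ioc).mpr (ae_of_all _ ?_)
  intro t ht
  have ht0 : 0 < t := ht.1
  have ht2 : t ≤ Real.pi/2 := ht.2
  have hsin_pos : 0 < Real.sin t := Real.sin_pos_of_pos_of_lt_pi ht0 (by linarith)
  have hsin_le : Real.sin t ≤ t := le_of_lt (Real.sin_lt ht0)
  have hsin_ge : t * (2/Real.pi) ≤ Real.sin t := by
    have := Real.mul_le_sin (le_of_lt ht0) ht2
    linarith [this]
  have habs : |2 * Real.sin t| = 2 * Real.sin t := abs_of_pos (by linarith)
  have hrpow_pos : (0:ℝ) < t ^ (-(1:ℝ)/2) := Real.rpow_pos_of_pos ht0 _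
  rw [Real.norm_eq_abs, abs_le]
  constructor
  · -- lower bound : -(log 2 + 2 t^{-1/2}) ≤ Lf t
    have hlow : Real.log t + Real.log (2/Real.pi) ≤ Lf t := by
      have : t * (2/Real.pi) ≤ |2 * Real.sin t| := by rw [habs]; linarith
      calc Real.log t + Real.log (2/Real.pi) = Real.log (t * (2/Real.pi)) := by
            rw [Real.log_mul (ne_of_gt ht0) (by positivity)]
        _ ≤ Lf t := Real.log_le_log (by positivity) this
    have hlogt : -(2 * t ^ (-(1:ℝ)/2)) ≤ Real.log t := by
      rcases le_or_gt 1 t with h1 | h1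
      · have := Real.log_nonneg h1; nlinarith
      · have hinv : Real.log t = -Real.log t⁻¹ := by rw [Real.log_inv]; ring
        have h2 : Real.log t⁻¹ = 2 * Real.log (t⁻¹ ^ ((1:ℝ)/2)) := by
          rw [Real.log_rpow (by positivity)]; ring
        have h3 : Real.log (t⁻¹ ^ ((1:ℝ)/2)) ≤ t⁻¹ ^ ((1:ℝ)/2) - 1 :=
          Real.log_le_sub_one_of_pos (by positivity)
        have h4 : t⁻¹ ^ ((1:ℝ)/2) = t ^ (-(1:ℝ)/2) := by
          rw [Real.inv_rpow (le_of_lt ht0), ← Real.rpow_neg (le_of_lt ht0)]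
          norm_num
        have h3' : Real.log (t ^ (-(1:ℝ)/2)) ≤ t ^ (-(1:ℝ)/2) - 1 := h4 ▸ h3
        rw [hinv, h2, h4]
        linarith
    have hlog2pi : -Real.log 2 ≤ Real.log (2/Real.pi) := by
      have : Real.log (2/Real.pi) = Real.log 2 - Real.log Real.pi := by
        rw [Real.log_div (by norm_num) (ne_of_gt hpi)]
      have hppi : Real.log Real.pi ≤ Real.log 4 := by
        apply Real.log_le_log hpi; nlinarith [Real.pi_lt_d2]
      have h4 : Real.log 4 = 2 * Real.log 2 := by
        rw [show (4:ℝ) = 2^2 by norm_num, Real.log_pow]; norm_num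
      linarith [this, hppi, h4, Real.log_nonneg (by norm_num : (1:ℝ) ≤ 2)]
    linarith [hlow, hlogt]
  · -- upper bound: Lf t ≤ log 2 + 2 t^{-1/2}
    have : |2 * Real.sin t| ≤ 2 := by rw [habs]; nlinarith [Real.sin_le_one t]
    have h1 : Lf t ≤ Real.log 2 := Real.log_le_log (by rw [habs]; linarith) this
    nlinarith [h1, hrpow_pos]

lemma Lf_int_0pi : IntervalIntegrable Lf volume 0 Real.pi := by
  have h1 := Lf_int_half
  have h2 : IntervalIntegrable Lf volume (Real.pi/2) Real.pi := by
    have := (Lf_int_half.comp_sub_left Real.pi)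
    have heq : (fun x => Lf (Real.pi - x)) = Lf := by
      funext x; simp [Lf, Real.sin_pi_sub]
    rw [heq] at this
    have h3 : IntervalIntegrable Lf volume (Real.pi - 0) (Real.pi - Real.pi/2) := this
    have h4 := h3.symm
    rw [show Real.pi - Real.pi/2 = Real.pi/2 by ring, sub_zero] at h4
    exact h4
  exact h1.trans h2

lemma Lf_int (a b : ℝ) : IntervalIntegrable Lf volume a b := by
  have hpi := Real.pi_pos
  -- integrable on 0 .. n*π for all n
  have hnat : ∀ n : ℕ, IntervalIntegrable Lf volume 0 (n * Real.pi) := by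
    intro n
    induction n with
    | zero => simp
    | succ n ih =>
      have hshift : IntervalIntegrable Lf volume (n * Real.pi) ((n+1) * Real.pi) := by
        have := Lf_int_0pi.comp_sub_right (n * Real.pi)
        have heq : (fun x => Lf (x - n * Real.pi)) = Lf := by
          funext x
          have := (Lf_periodic.nat_mul n).sub_eq x
          simpa [mul_comm] using this
        rw [heq] at this
        simpa [add_comm, add_mul] using this
      push_cast
      exact ih.trans hshift
  have hneg : ∀ n : ℕ, IntervalIntegrable Lf volume (-(n * Real.pi)) 0 := by
    intro n
    have h := (IntervalIntegrable.iff_comp_neg enorm_ne_top).mp (hnat n).symm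
    have heq : (fun x : ℝ => Lf (-x)) = Lf := by funext x; exact Lf_even x
    rw [heq] at h
    simpa using h
  obtain ⟨n, hn⟩ := exists_nat_ge ((max |a| |b|) / Real.pi)
  have hn' : max |a| |b| ≤ n * Real.pi := by
    rw [div_le_iff₀ hpi] at hn; linarith
  have hbig : IntervalIntegrable Lf volume (-(n * Real.pi)) (n * Real.pi) :=
    (hneg n).trans (hnat n)
  have hsub : Set.uIcc a b ⊆ Set.uIcc (-(n * Real.pi)) (n * Real.pi) := by
    apply Set.uIcc_subset_uIcc <;> rw [Set.mem_uIcc] <;>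
      [left; left] <;> constructor <;>
      cases' abs_le.mp (le_trans (le_max_left |a| |b|) hn') with h1 h2 <;>
      cases' abs_le.mp (le_trans (le_max_right |a| |b|) hn') with h3 h4 <;> linarith
  exact hbig.mono_set hsub

lemma Lf_comp_int (k d a b : ℝ) (hk : k ≠ 0) :
    IntervalIntegrable (fun x => Lf (k * x + d)) volume a b := by
  have h1 := (Lf_int (k*a+d) (k*b+d)).comp_add_right d
  have h2 := h1.comp_mul_left (c := k)
  have e1 : (k*a+d-d)/k = a := by field_simp; ring
  have e2 : (k*b+d-d)/k = b := by field_simp; ring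
  rw [e1, e2] at h2
  exact h2

noncomputable def Lob' (x : ℝ) : ℝ := -∫ t in (0:ℝ)..x, Lf t

lemma Lob'_sub (a b : ℝ) : Lob' b - Lob' a = -∫ t in a..b, Lf t := by
  have := intervalIntegral.integral_add_adjacent_intervals (Lf_int 0 a) (Lf_int a b)
  simp only [Lob']
  linarith

lemma Lob'_odd (x : ℝ) : Lob' (-x) = -Lob' x := by
  have h : (∫ t in (0:ℝ)..x, Lf (-t)) = ∫ t in (-x)..(0:ℝ), Lf t := by
    simpa using intervalIntegral.integral_comp_neg (a := 0) (b := x) Lf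
  have heq : (∫ t in (0:ℝ)..x, Lf (-t)) = ∫ t in (0:ℝ)..x, Lf t := by
    apply intervalIntegral.integral_congr; intro t _; exact Lf_even t
  have hsymm : (∫ t in (0:ℝ)..(-x), Lf t) = -(∫ t in (-x)..(0:ℝ), Lf t) :=
    intervalIntegral.integral_symm _ _
  simp only [Lob']
  rw [hsymm, ← h, heq]

lemma Lf_integral_pi : (∫ t in (0:ℝ)..Real.pi, Lf t) = 0 := by
  have hpi := Real.pi_pos
  have hdouble : (∫ x in (0:ℝ)..(Real.pi/2), Lf (2*x)) = (2:ℝ)⁻¹ * ∫ t in (0:ℝ)..Real.pi, Lf t := by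
    have h := intervalIntegral.integral_comp_mul_left (a := 0) (b := Real.pi/2) Lf
      (c := 2) (by norm_num)
    rw [h, show 2*(Real.pi/2) = Real.pi by ring, show (2:ℝ)*0 = 0 by ring, smul_eq_mul]
  have hsplit : (∫ x in (0:ℝ)..(Real.pi/2), Lf (2*x))
      = (∫ x in (0:ℝ)..(Real.pi/2), Lf x + Lf (x + Real.pi/2)) := by
    apply intervalIntegral.integral_congr_ae
    have hne : ∀ᵐ x : ℝ, x ≠ Real.pi/2 := by
      refine ae_iff.mpr ?_
      have : {x : ℝ | ¬ x ≠ Real.pi/2} = {Real.pi/2} := by ext x; simp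
      rw [this]; exact Real.volume_singleton
    filter_upwards [hne] with x hx hxmem
    rw [Set.uIoc_of_le (by positivity)] at hxmem
    have hx0 : 0 < x := hxmem.1
    have hx2 : x ≤ Real.pi/2 := hxmem.2
    have hx2' : x < Real.pi/2 := lt_of_le_of_ne hx2 hx
    have hsin : Real.sin x ≠ 0 :=
      ne_of_gt (Real.sin_pos_of_pos_of_lt_pi hx0 (by linarith))
    have hcos : Real.cos x ≠ 0 :=
      ne_of_gt (Real.cos_pos_of_mem_Ioo ⟨by linarith, hx2'⟩)
    simp only [Lf]
    rw [← Real.log_mul (by simpa using hsin) ?hb]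
    · congr 1
      rw [← abs_mul, Real.sin_two_mul, Real.sin_add_pi_div_two]
      ring_nf
    · simpa [Real.sin_add_pi_div_two] using hcos
  have hadd : (∫ x in (0:ℝ)..(Real.pi/2), Lf x + Lf (x + Real.pi/2))
      = (∫ x in (0:ℝ)..(Real.pi/2), Lf x) + ∫ x in (0:ℝ)..(Real.pi/2), Lf (x + Real.pi/2) := by
    apply intervalIntegral.integral_add Lf_int_half
    simpa using Lf_comp_int 1 (Real.pi/2) 0 (Real.pi/2) one_ne_zero
  have hshift : (∫ x in (0:ℝ)..(Real.pi/2), Lf (x + Real.pi/2))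
      = ∫ x in (Real.pi/2)..Real.pi, Lf x := by
    have := intervalIntegral.integral_comp_add_right (a := 0) (b := Real.pi/2) Lf (Real.pi/2)
    rw [this]; norm_num
  have hglue : (∫ x in (0:ℝ)..(Real.pi/2), Lf x) + ∫ x in (Real.pi/2)..Real.pi, Lf x
      = ∫ t in (0:ℝ)..Real.pi, Lf t :=
    intervalIntegral.integral_add_adjacent_intervals Lf_int_half (Lf_int _ _)
  have hfin : (2:ℝ)⁻¹ * (∫ t in (0:ℝ)..Real.pi, Lf t) = ∫ t in (0:ℝ)..Real.pi, Lf t := by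
    rw [← hdouble, hsplit, hadd, hshift, hglue]
  linarith

lemma Lob'_periodic (x : ℝ) : Lob' (x + Real.pi) = Lob' x := by
  have h := Lob'_sub x (x + Real.pi)
  have h2 : (∫ t in x..(x + Real.pi), Lf t) = ∫ t in (0:ℝ)..(0 + Real.pi), Lf t :=
    Lf_periodic.intervalIntegral_add_eq x 0
  rw [h2] at h
  simp only [zero_add] at h
  rw [Lf_integral_pi] at h
  linarith

noncomputable def gg (a b : ℝ) (c : ℝ) : ℝ :=
  Lf ((1/2)*c + (a-b)/2) + Lf ((1/2)*c + (b-a)/2)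
    - Lf ((1/2)*c + (a+b)/2) - Lf (-((1/2)*c) + (a+b)/2)

lemma Lf_comp_int' (d x y : ℝ) : IntervalIntegrable (fun c => Lf (-((1/2)*c) + d)) volume x y := by
  have h := Lf_comp_int (-(1/2)) d x y (by norm_num)
  simp only [neg_mul] at h
  exact h

lemma gg_int (a b x y : ℝ) : IntervalIntegrable (gg a b) volume x y := by
  apply IntervalIntegrable.sub
  apply IntervalIntegrable.sub
  apply IntervalIntegrable.add
  · exact Lf_comp_int _ _ _ _ (by norm_num)
  · exact Lf_comp_int _ _ _ _ (by norm_num)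
  · exact Lf_comp_int _ _ _ _ (by norm_num)
  · exact Lf_comp_int' _ _ _

lemma comp_eval (d x y : ℝ) :
    (∫ c in x..y, Lf ((1/2)*c + d)) = 2 * ∫ t in ((1/2)*x + d)..((1/2)*y + d), Lf t := by
  have h := intervalIntegral.integral_comp_mul_add (a := x) (b := y) Lf
    (c := (1/2 : ℝ)) (by norm_num) d
  rw [h, smul_eq_mul]
  norm_num

lemma nu_eq (a b g : ℝ) : nu a b g = (1/4) * ∫ c in (0:ℝ)..g, gg a b c := by
  have hint : ∀ (k d x y : ℝ), k ≠ 0 → IntervalIntegrable (fun c => Lf (k*c + d)) volume x y :=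
    fun k d x y hk => Lf_comp_int k d x y hk
  have hdum : ∀ x:ℝ, True := fun _ => trivial
  -- A := ∫_0^g Lf(c/2 + ((a+b)/2)), A' := ∫_0^g Lf(-c/2 + ((a+b)/2))
  have claim1 : Lob' ((a+b+g)/2) - Lob' ((a+b-g)/2)
      = -(1/2) * ((∫ c in (0:ℝ)..g, Lf ((1/2)*c + ((a+b)/2))) + ∫ c in (0:ℝ)..g, Lf (-((1/2)*c) + ((a+b)/2))) := by
    rw [Lob'_sub]
    have e1 : (a+b-g)/2 = (1/2)*(-g) + ((a+b)/2) := by ring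
    have e2 : (a+b+g)/2 = (1/2)*g + ((a+b)/2) := by ring
    have e3 : (∫ t in ((1/2)*(-g) + ((a+b)/2))..((1/2)*g + ((a+b)/2)), Lf t)
        = (1/2) * ∫ c in (-g)..g, Lf ((1/2)*c + ((a+b)/2)) := by rw [comp_eval]; ring
    rw [e1, e2, e3]
    have hsplit := intervalIntegral.integral_add_adjacent_intervals
      (hint (1/2) ((a+b)/2) (-g) 0 (by norm_num)) (hint (1/2) ((a+b)/2) 0 g (by norm_num))
    have hneg : (∫ c in (0:ℝ)..g, Lf ((1/2)*(-c) + ((a+b)/2))) = ∫ c in (-g)..(0:ℝ), Lf ((1/2)*c + ((a+b)/2)) := by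
      have h := intervalIntegral.integral_comp_neg (a := 0) (b := g) (fun c => Lf ((1/2)*c + ((a+b)/2)))
      simp only [neg_zero] at h
      exact h
    rw [← hsplit, ← hneg]
    simp only [mul_neg]
    ring
  have claim2 : ∀ u : ℝ, Lob' ((u+g)/2) - Lob' (u/2) = -(1/2) * ∫ c in (0:ℝ)..g, Lf ((1/2)*c + u/2) := by
    intro u
    rw [Lob'_sub]
    have e4 : (∫ t in (u/2)..((u+g)/2), Lf t)
        = (1/2) * ∫ c in (0:ℝ)..g, Lf ((1/2)*c + u/2) := by
      rw [comp_eval, show (1/2:ℝ)*0 + u/2 = u/2 by ring, show (1/2:ℝ)*g + u/2 = (u+g)/2 by ring]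
      ring
    rw [e4]
    ring
  have c2 := claim2 (a-b)
  have c3 := claim2 (b-a)
  have hodd : Lob' ((b-a)/2) = -Lob' ((a-b)/2) := by
    rw [show (b-a)/2 = -((a-b)/2) by ring, Lob'_odd]
  have hgg : (∫ c in (0:ℝ)..g, gg a b c)
      = (∫ c in (0:ℝ)..g, Lf ((1/2)*c + (a-b)/2)) + (∫ c in (0:ℝ)..g, Lf ((1/2)*c + (b-a)/2))
        - (∫ c in (0:ℝ)..g, Lf ((1/2)*c + (a+b)/2)) - ∫ c in (0:ℝ)..g, Lf (-((1/2)*c) + (a+b)/2) := by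
    have i1 : IntervalIntegrable (fun c => Lf ((1/2)*c + (a-b)/2)) volume 0 g :=
      hint _ _ _ _ (by norm_num)
    have i2 : IntervalIntegrable (fun c => Lf ((1/2)*c + (b-a)/2)) volume 0 g :=
      hint _ _ _ _ (by norm_num)
    have i3 : IntervalIntegrable (fun c => Lf ((1/2)*c + (a+b)/2)) volume 0 g :=
      hint _ _ _ _ (by norm_num)
    have i4 : IntervalIntegrable (fun c => Lf (-((1/2)*c) + (a+b)/2)) volume 0 g :=
      Lf_comp_int' _ _ _
    unfold gg
    rw [intervalIntegral.integral_sub ((i1.add i2).sub i3) i4,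
      intervalIntegral.integral_sub (i1.add i2) i3,
      intervalIntegral.integral_add i1 i2]
  have hnu : nu a b g = (1/2) * (Lob' ((a+b+g)/2) - Lob' ((a+b-g)/2)
      - (Lob' ((a-b+g)/2) - Lob' ((a-b)/2)) - (Lob' ((-a+b+g)/2) - Lob' ((b-a)/2))) := by
    unfold nu
    have : Lob = Lob' := rfl
    rw [this, hodd]
    ring
  rw [hnu, claim1, show (a-b+g)/2 = ((a-b)+g)/2 by ring, c2,
    show (-a+b+g)/2 = ((b-a)+g)/2 by ring, c3, hgg]
  ring

lemma nu_pi (a b : ℝ) : nu a b Real.pi = 0 := by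
  unfold nu
  have hL : Lob = Lob' := rfl
  rw [hL]
  have h1 : Lob' ((a+b+Real.pi)/2) = Lob' ((a+b-Real.pi)/2) := by
    rw [show (a+b+Real.pi)/2 = (a+b-Real.pi)/2 + Real.pi by ring, Lob'_periodic]
  have h2 : Lob' ((-a+b+Real.pi)/2) = -Lob' ((a-b+Real.pi)/2) := by
    rw [show (-a+b+Real.pi)/2 = -((a-b+Real.pi)/2) + Real.pi by ring, Lob'_periodic, Lob'_odd]
  rw [h1, h2]
  ring

lemma gg_eq (a b c : ℝ) (hN : Real.cos (a-b) - Real.cos c ≠ 0)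
    (hD : Real.cos c - Real.cos (a+b) ≠ 0) :
    gg a b c = Real.log |2*(Real.cos (a-b) - Real.cos c)|
      - Real.log |2*(Real.cos c - Real.cos (a+b))| := by
  have hprod1 : (2*Real.sin ((1/2)*c + (a-b)/2)) * (2*Real.sin ((1/2)*c + (b-a)/2))
      = 2*(Real.cos (a-b) - Real.cos c) := by
    have h := Real.cos_sub_cos (a-b) c
    rw [show ((a-b)+c)/2 = (1/2)*c + (a-b)/2 by ring,
      show ((a-b)-c)/2 = -((1/2)*c + (b-a)/2) by ring, Real.sin_neg] at h
    linear_combination (-2)*h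
  have hprod2 : (2*Real.sin ((1/2)*c + (a+b)/2)) * (2*Real.sin (-((1/2)*c) + (a+b)/2))
      = 2*(Real.cos c - Real.cos (a+b)) := by
    have h := Real.cos_sub_cos c (a+b)
    rw [show (c+(a+b))/2 = (1/2)*c + (a+b)/2 by ring,
      show (c-(a+b))/2 = -(-((1/2)*c) + (a+b)/2) by ring, Real.sin_neg] at h
    linear_combination (-2)*h
  have h1ne : (2*Real.sin ((1/2)*c + (a-b)/2)) ≠ 0 := by
    intro h; rw [h, zero_mul] at hprod1; exact hN (by linarith)
  have h2ne : (2*Real.sin ((1/2)*c + (b-a)/2)) ≠ 0 := by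
    intro h; rw [h, mul_zero] at hprod1; exact hN (by linarith)
  have h3ne : (2*Real.sin ((1/2)*c + (a+b)/2)) ≠ 0 := by
    intro h; rw [h, zero_mul] at hprod2; exact hD (by linarith)
  have h4ne : (2*Real.sin (-((1/2)*c) + (a+b)/2)) ≠ 0 := by
    intro h; rw [h, mul_zero] at hprod2; exact hD (by linarith)
  unfold gg Lf
  rw [show ∀ w x y z : ℝ, w + x - y - z = (w + x) - (y + z) from fun _ _ _ _ => by ring]
  rw [← Real.log_mul (abs_ne_zero.mpr h1ne) (abs_ne_zero.mpr h2ne),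
    ← Real.log_mul (abs_ne_zero.mpr h3ne) (abs_ne_zero.mpr h4ne),
    ← abs_mul, ← abs_mul, hprod1, hprod2]

/-- ν(α,β,γ) ≤ 0 when 0 ≤ α,β,γ ≤ π. -/
theorem nu_nonpos (α β γ : ℝ)
    (hα : 0 ≤ α) (hα' : α ≤ Real.pi)
    (hβ : 0 ≤ β) (hβ' : β ≤ Real.pi)
    (hγ : 0 ≤ γ) (hγ' : γ ≤ Real.pi) :
    nu α β γ ≤ 0 := by
  have hπ := Real.pi_pos
  set p := Real.sin α * Real.sin β with hpdef
  have hp0 : 0 ≤ p := mul_nonneg (Real.sin_nonneg_of_nonneg_of_le_pi hα hα')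
    (Real.sin_nonneg_of_nonneg_of_le_pi hβ hβ')
  set k := Real.cos α * Real.cos β with hkdef
  have hcab : Real.cos (α-β) = k + p := by rw [Real.cos_sub]
  have hcadd : Real.cos (α+β) = k - p := by rw [Real.cos_add]
  have hk1 : -1 ≤ k := by
    nlinarith [Real.neg_one_le_cos α, Real.cos_le_one α, Real.neg_one_le_cos β,
      Real.cos_le_one β]
  have hk2 : k ≤ 1 := by
    nlinarith [Real.neg_one_le_cos α, Real.cos_le_one α, Real.neg_one_le_cos β,
      Real.cos_le_one β]
  set cs := Real.arccos k with hcsdef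
  have hcs0 : 0 ≤ cs := Real.arccos_nonneg k
  have hcsπ : cs ≤ Real.pi := Real.arccos_le_pi k
  have hccs : Real.cos cs = k := Real.cos_arccos hk1 hk2
  set e1 := Real.arccos (Real.cos (α-β)) with he1def
  set e2 := Real.arccos (Real.cos (α+β)) with he2def
  have hce1 : Real.cos e1 = Real.cos (α-β) :=
    Real.cos_arccos (Real.neg_one_le_cos _) (Real.cos_le_one _)
  have hce2 : Real.cos e2 = Real.cos (α+β) :=
    Real.cos_arccos (Real.neg_one_le_cos _) (Real.cos_le_one _)
  have hae : ∀ᵐ x : ℝ, x ≠ e1 ∧ x ≠ e2 := by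
    have a1 : ∀ᵐ x : ℝ, x ≠ e1 := by
      refine ae_iff.mpr ?_
      have h : {x : ℝ | ¬ x ≠ e1} = {e1} := by ext x; simp
      rw [h]; exact Real.volume_singleton
    have a2 : ∀ᵐ x : ℝ, x ≠ e2 := by
      refine ae_iff.mpr ?_
      have h : {x : ℝ | ¬ x ≠ e2} = {e2} := by ext x; simp
      rw [h]; exact Real.volume_singleton
    exact a1.and a2
  have key1 : ∀ c ∈ Set.Icc (0:ℝ) Real.pi, c ≠ e1 → Real.cos (α-β) - Real.cos c ≠ 0 := by
    intro c hc hne h0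
    apply hne
    have hcc : Real.cos c = Real.cos e1 := by rw [hce1]; linarith
    exact Real.injOn_cos ⟨hc.1, hc.2⟩ ⟨Real.arccos_nonneg _, Real.arccos_le_pi _⟩ hcc
  have key2 : ∀ c ∈ Set.Icc (0:ℝ) Real.pi, c ≠ e2 → Real.cos c - Real.cos (α+β) ≠ 0 := by
    intro c hc hne h0
    apply hne
    have hcc : Real.cos c = Real.cos e2 := by rw [hce2]; linarith
    exact Real.injOn_cos ⟨hc.1, hc.2⟩ ⟨Real.arccos_nonneg _, Real.arccos_le_pi _⟩ hcc
  have sign : ∀ c ∈ Set.Icc (0:ℝ) Real.pi, c ≠ e1 → c ≠ e2 →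
      ((c ≤ cs → gg α β c ≤ 0) ∧ (cs ≤ c → 0 ≤ gg α β c)) := by
    intro c hc h1 h2
    have hN := key1 c hc h1
    have hD := key2 c hc h2
    rw [gg_eq α β c hN hD]
    set q := Real.cos c - k with hqdef
    have eN : Real.cos (α-β) - Real.cos c = p - q := by rw [hcab]; ring
    have eD : Real.cos c - Real.cos (α+β) = q + p := by rw [hcadd]; ring
    rw [eN] at hN ⊢
    rw [eD] at hD ⊢
    constructor
    · intro hle
      have hq0 : 0 ≤ q := by
        have := Real.cos_le_cos_of_nonneg_of_le_pi hc.1 hcsπ hle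
        rw [hccs] at this; simp only [hqdef]; linarith
      have habs : |2*(p-q)| ≤ |2*(q+p)| := by
        rw [abs_of_nonneg (by linarith : (0:ℝ) ≤ 2*(q+p))]
        rw [abs_le]; constructor <;> linarith
      have hpos : 0 < |2*(p-q)| := abs_pos.mpr (by intro h; exact hN (by linarith))
      have := Real.log_le_log hpos habs
      linarith
    · intro hle
      have hq0 : q ≤ 0 := by
        have := Real.cos_le_cos_of_nonneg_of_le_pi hcs0 hc.2 hle
        rw [hccs] at this; simp only [hqdef]; linarith
      have habs : |2*(q+p)| ≤ |2*(p-q)| := by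
        rw [abs_of_nonneg (by linarith : (0:ℝ) ≤ 2*(p-q))]
        rw [abs_le]; constructor <;> linarith
      have hpos : 0 < |2*(q+p)| := abs_pos.mpr (by intro h; exact hD (by linarith))
      have := Real.log_le_log hpos habs
      linarith
  rcases le_total γ cs with hγcs | hγcs
  · rw [nu_eq]
    have hI : (∫ c in (0:ℝ)..γ, gg α β c) ≤ 0 := by
      have h := intervalIntegral.integral_nonneg_of_ae_restrict (μ := volume)
        (f := fun c => -gg α β c) hγ ?_
      · rw [intervalIntegral.integral_neg] at h; linarith
      · filter_upwards [ae_restrict_of_ae hae, ae_restrict_mem measurableSet_Icc]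
          with c hc hmem
        have hcIcc : c ∈ Set.Icc (0:ℝ) Real.pi :=
          ⟨hmem.1, le_trans hmem.2 (le_trans hγcs hcsπ)⟩
        exact neg_nonneg.mpr ((sign c hcIcc hc.1 hc.2).1 (le_trans hmem.2 hγcs))
    linarith
  · have hπ0 : nu α β Real.pi = 0 := nu_pi α β
    rw [nu_eq] at hπ0 ⊢
    have hsplit : (∫ c in (0:ℝ)..γ, gg α β c) + (∫ c in γ..Real.pi, gg α β c)
        = ∫ c in (0:ℝ)..Real.pi, gg α β c :=
      intervalIntegral.integral_add_adjacent_intervals (gg_int α β 0 γ) (gg_int α β γ Real.pi)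
    have hpos : 0 ≤ ∫ c in γ..Real.pi, gg α β c := by
      apply intervalIntegral.integral_nonneg_of_ae_restrict hγ'
      filter_upwards [ae_restrict_of_ae hae, ae_restrict_mem measurableSet_Icc]
        with c hc hmem
      have hcIcc : c ∈ Set.Icc (0:ℝ) Real.pi := ⟨le_trans hγ hmem.1, hmem.2⟩
      exact (sign c hcIcc hc.1 hc.2).2 (le_trans hγcs hmem.1)
    linarith

end AuxNuNonpos
end

section
/- If x, y, z are real numbers with 0 ≤ x+y ≤ π, 0 ≤ x+z ≤ π, and 0 ≤ y+z ≤ π, then (1/2)(Λ(x+y+z) − Λ(x) − Λ(y) − Λ(z)) ≤ 0. -/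
open Real Filter

namespace LobAux

open MeasureTheory intervalIntegral Set

noncomputable def g (t : ℝ) : ℝ := Real.log |2 * Real.sin t|

lemma g_meas : Measurable g :=
  Real.measurable_log.comp (continuous_abs.comp (continuous_const.mul Real.continuous_sin)).measurable

lemma g_per : Function.Periodic g Real.pi := by
  intro t
  unfold g
  rw [Real.sin_add_pi, show (2:ℝ) * -Real.sin t = -(2 * Real.sin t) by ring, abs_neg]

lemma g_even (t : ℝ) : g (-t) = g t := by
  unfold g
  rw [Real.sin_neg, show (2:ℝ) * -Real.sin t = -(2 * Real.sin t) by ring, abs_neg]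

lemma abs_rpow_eq (t : ℝ) :
    |t| ^ (-(1/2) : ℝ) = t ^ (-(1/2) : ℝ) + (-t) ^ (-(1/2) : ℝ) := by
  have hc : Real.cos (-(1/2) * Real.pi) = 0 := by
    rw [show (-(1/2) : ℝ) * Real.pi = -(Real.pi/2) by ring, Real.cos_neg, Real.cos_pi_div_two]
  rcases lt_trichotomy t 0 with h | h | h
  · rw [abs_of_neg h, Real.rpow_def_of_neg h, hc, mul_zero, zero_add]
  · subst h
    rw [abs_zero, neg_zero, Real.zero_rpow (by norm_num)]
    norm_num
  · rw [abs_of_pos h, Real.rpow_def_of_neg (by linarith : -t < 0), hc, mul_zero, add_zero]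

lemma neg_log_le {s : ℝ} (hs : 0 < s) : -Real.log s ≤ 2 * s ^ (-(1/2) : ℝ) := by
  have h0 : (0:ℝ) < s ^ (-(1/2) : ℝ) := Real.rpow_pos_of_pos hs _
  have h1 : Real.log (s ^ (-(1/2) : ℝ)) ≤ s ^ (-(1/2) : ℝ) :=
    (Real.log_le_sub_one_of_pos h0).trans (by linarith)
  rw [Real.log_rpow hs] at h1
  linarith

lemma int_dom (a b : ℝ) :
    IntervalIntegrable (fun t => (Real.log 2 + |Real.log (2/Real.pi)|) +
      2 * (t ^ (-(1/2):ℝ) + (-t) ^ (-(1/2):ℝ))) volume a b := by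
  apply IntervalIntegrable.add (intervalIntegrable_const)
  apply IntervalIntegrable.const_mul
  apply IntervalIntegrable.add (intervalIntegrable_rpow' (by norm_num))
  have h := (IntervalIntegrable.iff_comp_neg).mp
    (intervalIntegrable_rpow' (r := -(1/2)) (a := -a) (b := -b) (by norm_num))
  simpa using h

lemma int_base : IntervalIntegrable g volume (-(Real.pi/2)) (Real.pi/2) := by
  rw [intervalIntegrable_iff]
  refine MeasureTheory.Integrable.mono'
    (g := fun t => (Real.log 2 + |Real.log (2/Real.pi)|) +
      2 * (t ^ (-(1/2):ℝ) + (-t) ^ (-(1/2):ℝ))) ?_ ?_ ?_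
  · exact (intervalIntegrable_iff.mp (int_dom _ _))
  · exact (g_meas.aestronglyMeasurable).restrict
  · have hpi := Real.pi_pos
    filter_upwards [MeasureTheory.ae_restrict_mem measurableSet_uIoc] with t ht
    rw [Set.uIoc_of_le (by linarith : -(Real.pi/2) ≤ Real.pi/2)] at ht
    have habs : |t| ≤ Real.pi/2 := abs_le.mpr ⟨ht.1.le, ht.2⟩
    rw [← abs_rpow_eq]
    by_cases ht0 : t = 0
    · subst ht0
      simp only [g, Real.sin_zero, mul_zero, abs_zero, Real.log_zero, norm_zero, abs_zero]
      rw [Real.zero_rpow (by norm_num)]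
      have := Real.log_nonneg (by norm_num : (1:ℝ) ≤ 2)
      positivity
    · have htpos : 0 < |t| := abs_pos.mpr ht0
      have hsin : (2/Real.pi) * |t| ≤ |Real.sin t| := Real.mul_abs_le_abs_sin habs
      have hsinpos : 0 < |Real.sin t| := lt_of_lt_of_le (by positivity) hsin
      have habs2 : |2 * Real.sin t| = 2 * |Real.sin t| := by
        rw [abs_mul, abs_two]
      have hupper : g t ≤ Real.log 2 := by
        unfold g
        have : |2 * Real.sin t| ≤ 2 := by
          rw [habs2]
          have h1 : |Real.sin t| ≤ 1 := Real.abs_sin_le_one t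
          linarith
        exact Real.log_le_log (by rw [habs2]; positivity) this
      have hlower : -(Real.log 2 + |Real.log (2/Real.pi)| + 2 * |t| ^ (-(1/2):ℝ)) ≤ g t := by
        unfold g
        rw [habs2, Real.log_mul (by norm_num) (ne_of_gt hsinpos)]
        have h1 : Real.log ((2/Real.pi) * |t|) ≤ Real.log |Real.sin t| :=
          Real.log_le_log (by positivity) hsin
        rw [Real.log_mul (by positivity) (ne_of_gt htpos)] at h1
        have h2 : -Real.log |t| ≤ 2 * |t| ^ (-(1/2):ℝ) := neg_log_le htpos
        have h3 : -|Real.log (2/Real.pi)| ≤ Real.log (2/Real.pi) := neg_abs_le _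
        have h4 : (0:ℝ) ≤ Real.log 2 := Real.log_nonneg (by norm_num)
        linarith
      rw [Real.norm_eq_abs, abs_le]
      constructor
      · linarith
      · have : (0:ℝ) ≤ |t| ^ (-(1/2):ℝ) := Real.rpow_nonneg (abs_nonneg t) _
        have := abs_nonneg (Real.log (2/Real.pi))
        linarith

lemma int_shift (k : ℤ) :
    IntervalIntegrable g volume (-(Real.pi/2) + k * Real.pi) (Real.pi/2 + k * Real.pi) := by
  have h := int_base.comp_sub_right (k * Real.pi)
  have he : (fun x => g (x - k * Real.pi)) = g := by
    funext x
    have := (g_per.int_mul k).sub_eq x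
    simpa using this
  rwa [he] at h

lemma int_shift' (k : ℤ) (a b : ℝ) (ha : a = -(Real.pi/2) + k * Real.pi)
    (hb : b = Real.pi/2 + k * Real.pi) : IntervalIntegrable g volume a b := by
  subst ha hb; exact int_shift k

lemma int_sym (n : ℕ) :
    IntervalIntegrable g volume (-(Real.pi/2) - n * Real.pi) (Real.pi/2 + n * Real.pi) := by
  induction n with
  | zero => simpa using int_base
  | succ n ih =>
    have L : IntervalIntegrable g volume (-(Real.pi/2) - (n+1) * Real.pi) (-(Real.pi/2) - n * Real.pi) :=
      int_shift' (-(n+1)) _ _ (by push_cast; ring) (by push_cast; ring)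
    have R : IntervalIntegrable g volume (Real.pi/2 + n * Real.pi) (Real.pi/2 + (n+1) * Real.pi) :=
      int_shift' (n+1) _ _ (by push_cast; ring) (by push_cast; ring)
    have h := (L.trans (ih.trans R))
    push_cast
    exact h

lemma gint (a b : ℝ) : IntervalIntegrable g volume a b := by
  have hpi := Real.pi_pos
  obtain ⟨n, hn⟩ := exists_nat_gt (max |a| |b| / Real.pi)
  have hn' : max |a| |b| ≤ n * Real.pi := by
    rw [div_lt_iff₀ hpi] at hn
    linarith
  refine (int_sym n).mono_set ?_
  apply Set.uIcc_subset_uIcc <;> rw [Set.mem_uIcc] <;> left <;> constructor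
  · have : |a| ≤ n * Real.pi := le_trans (le_max_left _ _) hn'
    have := abs_le.mp this
    linarith
  · have := abs_le.mp (le_trans (le_max_left _ _) hn')
    linarith
  · have := abs_le.mp (le_trans (le_max_right _ _) hn')
    linarith
  · have := abs_le.mp (le_trans (le_max_right _ _) hn')
    linarith

lemma lob_eq (x : ℝ) : Lob x = -∫ t in (0:ℝ)..x, g t := rfl

lemma lob_cont : Continuous Lob := by
  have : Continuous fun x => ∫ t in (0:ℝ)..x, g t :=
    intervalIntegral.continuous_primitive gint 0
  exact this.neg

lemma lob_hasDeriv {x : ℝ} (hx : Real.sin x ≠ 0) :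
    HasDerivAt Lob (-Real.log |2 * Real.sin x|) x := by
  have habs : |2 * Real.sin x| ≠ 0 := by
    simp [abs_eq_zero, hx]
  have hcont : ContinuousAt g x := by
    have h2 : ContinuousAt (fun t : ℝ => |2 * Real.sin t|) x :=
      ((continuous_abs.comp (continuous_const.mul Real.continuous_sin)).continuousAt)
    exact ContinuousAt.comp (Real.continuousAt_log habs) h2
  have h := intervalIntegral.integral_hasDerivAt_right (gint 0 x)
    (g_meas.stronglyMeasurable.stronglyMeasurableAtFilter)
    hcont
  exact h.neg

lemma lob_zero : Lob 0 = 0 := by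
  rw [lob_eq, intervalIntegral.integral_same, neg_zero]

lemma lob_neg (x : ℝ) : Lob (-x) = -Lob x := by
  rw [lob_eq, lob_eq, neg_inj]
  have h1 : ∫ t in (0:ℝ)..x, g (-t) = ∫ t in (-x)..(0:ℝ), g t := by
    simpa using intervalIntegral.integral_comp_neg (a := (0:ℝ)) (b := x) g
  have h2 : ∫ t in (0:ℝ)..x, g (-t) = ∫ t in (0:ℝ)..x, g t := by
    congr 1; funext t; exact g_even t
  rw [h2] at h1
  rw [intervalIntegral.integral_symm]
  linarith [h1]

lemma lob_add_pi (x : ℝ) : Lob (x + Real.pi) = Lob x + Lob Real.pi := by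
  have h1 := intervalIntegral.integral_add_adjacent_intervals (gint 0 x) (gint x (x + Real.pi))
  have h2 : ∫ t in x..(x + Real.pi), g t = ∫ t in (0:ℝ)..(0 + Real.pi), g t :=
    g_per.intervalIntegral_add_eq x 0
  simp only [zero_add] at h2
  simp only [lob_eq]
  rw [← h1, h2]
  ring

lemma sin_helper {α β : ℝ} (h0 : 0 ≤ α) (hab : α ≤ β) (hb : β ≤ Real.pi - α) :
    Real.sin α ≤ Real.sin β := by
  have hpi := Real.pi_pos
  have hα2 : α ≤ Real.pi/2 := by linarith
  rcases le_or_gt β (Real.pi/2) with h | h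
  · exact Real.strictMonoOn_sin.monotoneOn ⟨by linarith, hα2⟩ ⟨by linarith, h⟩ hab
  · rw [← Real.sin_pi_sub β]
    exact Real.strictMonoOn_sin.monotoneOn ⟨by linarith, hα2⟩ ⟨by linarith, by linarith⟩
      (by linarith)

lemma f_hasDeriv (a z : ℝ) (hz : Real.sin z ≠ 0) (haz : Real.sin (a+z) ≠ 0) :
    HasDerivAt (fun z => Lob (a + z) - Lob z)
      (Real.log |2 * Real.sin z| - Real.log |2 * Real.sin (a+z)|) z := by
  have h1 : HasDerivAt (fun z => Lob (a + z)) (-Real.log |2 * Real.sin (a+z)|) z :=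
    HasDerivAt.comp_const_add a z (lob_hasDeriv haz)
  have h2 := lob_hasDeriv hz
  have h3 : HasDerivAt (fun z => Lob (a + z) - Lob z)
      (-Real.log |2 * Real.sin (a+z)| - -Real.log |2 * Real.sin z|) z := h1.sub h2
  convert h3 using 1
  ring

lemma f_cont (a : ℝ) : Continuous (fun z => Lob (a + z) - Lob z) :=
  (lob_cont.comp (continuous_const.add continuous_id)).sub lob_cont

lemma anti_piece (a p q : ℝ)
    (h : ∀ z ∈ Set.Ioo p q,
      Real.sin z ≠ 0 ∧ Real.sin (a+z) ≠ 0 ∧ |Real.sin z| ≤ |Real.sin (a+z)|) :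
    AntitoneOn (fun z => Lob (a+z) - Lob z) (Set.Icc p q) := by
  apply antitoneOn_of_deriv_nonpos (convex_Icc p q) (f_cont a).continuousOn
  · rw [interior_Icc]
    intro z hz
    exact ((f_hasDeriv a z (h z hz).1 (h z hz).2.1).differentiableAt).differentiableWithinAt
  · rw [interior_Icc]
    intro z hz
    obtain ⟨h1, h2, h3⟩ := h z hz
    rw [(f_hasDeriv a z h1 h2).deriv]
    have h4 : Real.log |2 * Real.sin z| ≤ Real.log |2 * Real.sin (a+z)| := by
      apply Real.log_le_log
      · have : |Real.sin z| > 0 := abs_pos.mpr h1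
        rw [abs_mul, abs_two]; linarith
      · rw [abs_mul, abs_mul, abs_two]; linarith
    linarith

lemma mono_piece (a p q : ℝ)
    (h : ∀ z ∈ Set.Ioo p q,
      Real.sin z ≠ 0 ∧ Real.sin (a+z) ≠ 0 ∧ |Real.sin (a+z)| ≤ |Real.sin z|) :
    MonotoneOn (fun z => Lob (a+z) - Lob z) (Set.Icc p q) := by
  apply monotoneOn_of_deriv_nonneg (convex_Icc p q) (f_cont a).continuousOn
  · rw [interior_Icc]
    intro z hz
    exact ((f_hasDeriv a z (h z hz).1 (h z hz).2.1).differentiableAt).differentiableWithinAt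
  · rw [interior_Icc]
    intro z hz
    obtain ⟨h1, h2, h3⟩ := h z hz
    rw [(f_hasDeriv a z h1 h2).deriv]
    have h4 : Real.log |2 * Real.sin (a+z)| ≤ Real.log |2 * Real.sin z| := by
      apply Real.log_le_log
      · have : |Real.sin (a+z)| > 0 := abs_pos.mpr h2
        rw [abs_mul, abs_two]; linarith
      · rw [abs_mul, abs_mul, abs_two]; linarith
    linarith

lemma key (u v w : ℝ) (hvu : v ≤ u) (h0 : 0 ≤ u + v) (hπ : u + v ≤ Real.pi)
    (hw1 : -v ≤ w) (hw2 : w ≤ Real.pi - u) :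
    Lob (u + v + w) ≤ Lob u + Lob v + Lob w := by
  have hpi := Real.pi_pos
  rcases eq_or_lt_of_le h0 with heq | ha
  · have h1 : u + v + w = w := by linarith
    have h2 : v = -u := by linarith
    rw [h1, h2, lob_neg]
    linarith
  set a := u + v with hadef
  set f : ℝ → ℝ := fun z => Lob (a + z) - Lob z with hfdef
  set m := (Real.pi - a)/2 with hmdef
  have hu : 0 < u := by linarith
  have hv2 : v ≤ a/2 := by simp only [hadef]; linarith
  have hu2 : a/2 ≤ u := by simp only [hadef]; linarith
  have huv : u - v ≤ Real.pi := by linarith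
  have hm1 : -v ≤ m := by simp only [hmdef, hadef]; linarith
  have hm2 : m ≤ Real.pi - u := by simp only [hmdef, hadef]; linarith
  have h0m : (0:ℝ) ≤ m := by simp only [hmdef]; linarith
  -- endpoint values
  have e1 : f (-v) = Lob u + Lob v := by
    simp only [hfdef]
    rw [show a + -v = u by simp only [hadef]; ring, lob_neg]
    ring
  have e2 : f (Real.pi - u) = Lob u + Lob v := by
    simp only [hfdef]
    rw [show a + (Real.pi - u) = v + Real.pi by simp only [hadef]; ring,
      show Real.pi - u = -u + Real.pi by ring, lob_add_pi, lob_add_pi, lob_neg]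
    ring
  -- monotonicity pieces
  have A_neg : AntitoneOn f (Set.Icc (-v) (min m 0)) := by
    apply anti_piece
    intro z hz
    obtain ⟨hz1, hz2⟩ := hz
    have hz0 : z < 0 := lt_of_lt_of_le hz2 (min_le_right _ _)
    have hzpi : -Real.pi < z := by linarith
    have hsz : Real.sin z < 0 := Real.sin_neg_of_neg_of_neg_pi_lt hz0 hzpi
    have hsaz : 0 < Real.sin (a + z) := by
      apply Real.sin_pos_of_pos_of_lt_pi
      · have : u < a + z := by simp only [hadef]; linarith
        linarith
      · linarith
    refine ⟨ne_of_lt hsz, ne_of_gt hsaz, ?_⟩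
    rw [abs_of_neg hsz, abs_of_pos hsaz, ← Real.sin_neg]
    exact sin_helper (by linarith) (by linarith) (by linarith)
  have A_pos : AntitoneOn f (Set.Icc (max (-v) 0) m) := by
    apply anti_piece
    intro z hz
    obtain ⟨hz1, hz2⟩ := hz
    have hz0 : 0 < z := lt_of_le_of_lt (le_max_right _ _) hz1
    have hsz : 0 < Real.sin z := Real.sin_pos_of_pos_of_lt_pi hz0 (by simp only [hmdef] at hz2; linarith)
    have hsaz : 0 < Real.sin (a + z) := by
      apply Real.sin_pos_of_pos_of_lt_pi
      · linarith
      · simp only [hmdef] at hz2; linarith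
    refine ⟨ne_of_gt hsz, ne_of_gt hsaz, ?_⟩
    rw [abs_of_pos hsz, abs_of_pos hsaz]
    exact sin_helper hz0.le (by linarith) (by simp only [hmdef] at hz2; linarith)
  have M_mid : MonotoneOn f (Set.Icc m (min (Real.pi - a) (Real.pi - u))) := by
    apply mono_piece
    intro z hz
    obtain ⟨hz1, hz2⟩ := hz
    have hz3 : z < Real.pi - a := lt_of_lt_of_le hz2 (min_le_left _ _)
    have hz0 : 0 < z := lt_of_le_of_lt h0m hz1
    have hsz : 0 < Real.sin z := Real.sin_pos_of_pos_of_lt_pi hz0 (by linarith)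
    have hsaz : 0 < Real.sin (a + z) := by
      apply Real.sin_pos_of_pos_of_lt_pi
      · simp only [hmdef] at hz1; linarith
      · linarith
    refine ⟨ne_of_gt hsz, ne_of_gt hsaz, ?_⟩
    rw [abs_of_pos hsz, abs_of_pos hsaz, ← Real.sin_pi_sub (a+z)]
    exact sin_helper (by linarith) (by simp only [hmdef] at hz1; linarith) (by linarith)
  have M_right : MonotoneOn f (Set.Icc (Real.pi - a) (Real.pi - u)) := by
    apply mono_piece
    intro z hz
    obtain ⟨hz1, hz2⟩ := hz
    have hsz : 0 < Real.sin z := by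
      apply Real.sin_pos_of_pos_of_lt_pi
      · linarith
      · linarith
    have hs : 0 < a + z - Real.pi := by linarith
    have hs2 : a + z - Real.pi < v := by
      have := hadef
      linarith
    have hsins : 0 < Real.sin (a + z - Real.pi) := by
      apply Real.sin_pos_of_pos_of_lt_pi hs
      have : v ≤ Real.pi/2 := by linarith
      linarith
    have hrw : Real.sin (a + z) = -Real.sin (a + z - Real.pi) := by
      rw [← Real.sin_add_pi (a + z - Real.pi)]
      ring_nf
    have hsaz : Real.sin (a + z) < 0 := by rw [hrw]; linarith
    refine ⟨ne_of_gt hsz, ne_of_lt hsaz, ?_⟩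
    rw [abs_of_pos hsz, abs_of_neg hsaz, hrw, neg_neg]
    apply sin_helper hs.le (by linarith)
    have : z ≤ Real.pi - a/2 := by linarith
    linarith
  -- the claim
  have claim : ∀ z, -v ≤ z → z ≤ Real.pi - u → f z ≤ Lob u + Lob v := by
    intro z hz1 hz2
    rcases le_total z m with hzm | hzm
    · rcases le_or_gt v 0 with hv0 | hv0
      · have hmax : max (-v) 0 = -v := max_eq_left (by linarith)
        have h := A_pos (by rw [hmax]; exact ⟨le_refl _, hm1⟩)
          (by rw [hmax]; exact ⟨hz1, hzm⟩) hz1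
        rw [e1] at h; exact h
      · have hmin : min m 0 = 0 := min_eq_right h0m
        have hmax : max (-v) 0 = 0 := max_eq_right (by linarith)
        rcases le_total z 0 with hz0 | hz0
        · have h := A_neg (by rw [hmin]; exact ⟨le_refl _, by linarith⟩)
            (by rw [hmin]; exact ⟨hz1, hz0⟩) hz1
          rw [e1] at h; exact h
        · have h1 := A_pos (by rw [hmax]; exact ⟨le_refl _, h0m⟩)
            (by rw [hmax]; exact ⟨hz0, hzm⟩) hz0
          have h2 := A_neg (⟨le_refl _, by rw [hmin]; linarith⟩ : -v ∈ Set.Icc (-v) (min m 0))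
            (⟨by linarith, hmin.ge⟩ : (0:ℝ) ∈ Set.Icc (-v) (min m 0)) (by linarith)
          rw [e1] at h2
          exact le_trans h1 h2
    · rcases le_or_gt v 0 with hv0 | hv0
      · have hmin : min (Real.pi - a) (Real.pi - u) = Real.pi - u := by
          apply min_eq_right; simp only [hadef]; linarith
        have h := M_mid (by rw [hmin]; exact ⟨hzm, hz2⟩)
          (by rw [hmin]; exact ⟨hm2, le_refl _⟩) hz2
        rw [e2] at h; exact h
      · have hmin : min (Real.pi - a) (Real.pi - u) = Real.pi - a := by
          apply min_eq_left; simp only [hadef]; linarith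
        have hau : Real.pi - a ≤ Real.pi - u := by simp only [hadef]; linarith
        have hma : m ≤ Real.pi - a := by simp only [hmdef]; linarith
        rcases le_total z (Real.pi - a) with hz3 | hz3
        · have h1 := M_mid (by rw [hmin]; exact ⟨hzm, hz3⟩)
            (by rw [hmin]; exact ⟨hma, le_refl _⟩) hz3
          have h2 := M_right ⟨le_refl _, hau⟩ ⟨hau, le_refl _⟩ hau
          rw [e2] at h2
          exact le_trans h1 h2
        · have h := M_right ⟨hz3, hz2⟩ ⟨hau, le_refl _⟩ hz2
          rw [e2] at h; exact h
  have hfin := claim w hw1 hw2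
  simp only [hfdef, hadef] at hfin
  linarith

end LobAux

/-- (1/2)(Λ(x+y+z) − Λ(x) − Λ(y) − Λ(z)) ≤ 0 under the pairwise constraints. -/
theorem theta_nonpos (x y z : ℝ)
    (hxy : 0 ≤ x + y) (hxy' : x + y ≤ Real.pi)
    (hxz : 0 ≤ x + z) (hxz' : x + z ≤ Real.pi)
    (hyz : 0 ≤ y + z) (hyz' : y + z ≤ Real.pi) :
    (1/2) * (Lob (x + y + z) - Lob x - Lob y - Lob z) ≤ 0 := by
  rcases le_total y x with h | h
  · have := LobAux.key x y z h hxy hxy' (by linarith) (by linarith)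
    linarith
  · have := LobAux.key y x z h (by linarith) (by linarith) (by linarith) (by linarith)
    rw [show x + y + z = y + x + z by ring]
    linarith
end

section
/- Let a₁, a₂, a₃, a₄, b₁, b₂, b₃ be real numbers with 0 ≤ aᵢ ≤ π and 0 ≤ bⱼ ≤ π for all i, j, and with a₁+a₂+a₃+a₄+b₁+b₂+b₃ ≤ 2π. Then −Λ(a₁+a₂+a₃+a₄+b₁+b₂+b₃) + Σ_{i=1}^4 Λ(aᵢ) + Σ_{j=1}^3 Λ(bⱼ) + Λ((a₁+b₁)+(a₂+b₂)+(a₃+b₃)) − Λ(a₁+b₁) − Λ(a₂+b₂) − Λ(a₃+b₃) ≤ 8·Λ(π/4) = v₈. -/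
open Real Filter

section LobProof

open Real MeasureTheory intervalIntegral Set

noncomputable def ell (t : ℝ) : ℝ := Real.log |2 * Real.sin t|

lemma ell_even (t : ℝ) : ell (-t) = ell t := by
  simp [ell, Real.sin_neg, abs_mul, abs_neg]

lemma ell_periodic : Function.Periodic ell π := by
  intro t; simp [ell, Real.sin_add_pi, abs_mul, abs_neg]

lemma measurable_ell : Measurable ell :=
  (measurable_const.mul Real.measurable_sin).abs.log

/-- integrability of log on [0,b] for 0 ≤ b ≤ 2 -/
lemma intLog {b : ℝ} (hb0 : 0 ≤ b) (hb2 : b ≤ 2) :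
    IntervalIntegrable Real.log volume 0 b := by
  have h1 : IntegrableOn (fun t => -Real.log t) (Set.Ioc (0:ℝ) 1) volume := by
    apply intervalIntegral.integrableOn_deriv_of_nonneg
      (g := fun t => t - t * Real.log t)
    · exact (continuous_id.sub Real.continuous_mul_log).continuousOn
    · intro x hx
      have hx0 : x ≠ 0 := ne_of_gt hx.1
      have hd : HasDerivAt (fun t : ℝ => t - t * Real.log t)
          (1 - (1 * Real.log x + x * x⁻¹)) x :=
        (hasDerivAt_id x).sub ((hasDerivAt_id x).mul (Real.hasDerivAt_log hx0))
      convert hd using 1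
      field_simp
      ring
    · intro x hx
      simp only [neg_nonneg]
      exact Real.log_nonpos hx.1.le hx.2.le
  have h1' : IntegrableOn Real.log (Set.Ioc (0:ℝ) 1) volume := by
    rw [IntegrableOn, ← MeasureTheory.integrable_neg_iff]
    exact h1
  have i01 : IntervalIntegrable Real.log volume 0 1 := by
    rw [intervalIntegrable_iff_integrableOn_Ioc_of_le (by norm_num)]
    exact h1'
  have i12 : IntervalIntegrable Real.log volume 1 2 := by
    apply ContinuousOn.intervalIntegrable
    apply Real.continuousOn_log.mono
    intro x hx
    simp only [Set.uIcc_of_le (by norm_num : (1:ℝ) ≤ 2)] at hx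
    simp only [Set.mem_compl_iff, Set.mem_singleton_iff]
    intro h; rw [h] at hx; exact absurd hx.1 (by norm_num)
  exact (i01.trans i12).mono_set (by
    rw [Set.uIcc_of_le hb0, Set.uIcc_of_le (by norm_num : (0:ℝ) ≤ 2)]
    exact Set.Icc_subset_Icc le_rfl hb2)

/-- `ell` is dominated by `2 - log t` on `(0, 1]`. -/
lemma ell_integrable_01 : IntervalIntegrable ell volume 0 1 := by
  rw [intervalIntegrable_iff_integrableOn_Ioc_of_le (by norm_num : (0:ℝ) ≤ 1)]
  have hbound : IntegrableOn (fun t => 2 - Real.log t) (Set.Ioc (0:ℝ) 1) volume := by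
    have : IntervalIntegrable (fun t => 2 - Real.log t) volume 0 1 :=
      (_root_.intervalIntegrable_const (c := (2:ℝ))).sub (intLog (by norm_num) (by norm_num))
    rwa [intervalIntegrable_iff_integrableOn_Ioc_of_le (by norm_num : (0:ℝ) ≤ 1)] at this
  apply hbound.integrable.mono' (measurable_ell.aestronglyMeasurable)
  filter_upwards [MeasureTheory.ae_restrict_mem measurableSet_Ioc] with t ht
  have ht0 : 0 < t := ht.1
  have ht1 : t ≤ 1 := ht.2
  have hsinpos : 0 < Real.sin t :=
    Real.sin_pos_of_pos_of_lt_pi ht0 (lt_of_le_of_lt ht1 (by linarith [Real.pi_gt_three]))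
  have habs : |2 * Real.sin t| = 2 * Real.sin t := abs_of_pos (by linarith)
  rw [Real.norm_eq_abs, ell, habs, abs_le]
  constructor
  · -- -(2 - log t) ≤ log (2 sin t),  via  sin t ≥ t - t^3/4 ≥ (3/4) t
    have hs : (3/4) * t ≤ Real.sin t := by
      have h5 := Real.sin_gt_sub_cube ht0
      have ht3 : t^3 ≤ t := by nlinarith [sq_nonneg (1-t), sq_nonneg t]
      linarith
    have h2 : Real.log t + Real.log (3/2) ≤ Real.log (2 * Real.sin t) := by
      rw [← Real.log_mul (ne_of_gt ht0) (by norm_num)]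
      apply Real.log_le_log (by positivity)
      linarith
    have h3 : (0:ℝ) ≤ Real.log (3/2) := Real.log_nonneg (by norm_num)
    have h4 : Real.log t ≤ 0 := Real.log_nonpos ht0.le ht1
    linarith
  · -- log (2 sin t) ≤ log 2 ≤ 2 - log t
    have h1 : Real.log (2 * Real.sin t) ≤ Real.log 2 := by
      apply Real.log_le_log (by positivity)
      nlinarith [Real.sin_le_one t, hsinpos]
    have h2 : Real.log 2 ≤ 1 := by
      have := Real.log_le_sub_one_of_pos (by norm_num : (0:ℝ) < 2); linarith
    have h4 : Real.log t ≤ 0 := Real.log_nonpos ht0.le ht1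
    linarith

lemma ell_integrable_0_half_pi : IntervalIntegrable ell volume 0 (π/2) := by
  have i2 : IntervalIntegrable ell volume 1 (π/2) := by
    apply ContinuousOn.intervalIntegrable
    intro x hx
    rw [Set.uIcc_of_le (by linarith [Real.pi_gt_three] : (1:ℝ) ≤ π/2)] at hx
    have hx0 : 0 < Real.sin x := Real.sin_pos_of_pos_of_lt_pi (by linarith [hx.1])
      (by linarith [hx.2, Real.pi_pos])
    apply ContinuousAt.continuousWithinAt
    exact ((continuous_const.mul Real.continuous_sin).abs.continuousAt).log
      (by rw [abs_ne_zero]; exact mul_ne_zero two_ne_zero hx0.ne')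
  exact ell_integrable_01.trans i2

lemma ell_integrable_0_pi : IntervalIntegrable ell volume 0 π := by
  have i2 : IntervalIntegrable ell volume (π/2) π := by
    have h := (ell_integrable_0_half_pi).comp_sub_left π
    have : (fun x => ell (π - x)) = ell := by
      funext x
      simp [ell, Real.sin_pi_sub]
    rw [this] at h
    simpa [sub_half] using h.symm
  exact ell_integrable_0_half_pi.trans i2

lemma ell_shift_up {a b : ℝ} (h : IntervalIntegrable ell volume a b) :
    IntervalIntegrable ell volume (a + π) (b + π) := by
  have h2 := h.comp_add_right (-π)
  have he : (fun x => ell (x + -π)) = ell := by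
    funext x
    rw [← ell_periodic (x + -π)]
    ring_nf
  rw [he] at h2
  simpa using h2

lemma ell_shift_down {a b : ℝ} (h : IntervalIntegrable ell volume a b) :
    IntervalIntegrable ell volume (a - π) (b - π) := by
  have h2 := h.comp_add_right π
  have he : (fun x => ell (x + π)) = ell := by
    funext x; exact ell_periodic x
  rw [he] at h2
  exact h2

lemma ell_integrable (a b : ℝ) : IntervalIntegrable ell volume a b := by
  have Q : ∀ n : ℕ, IntervalIntegrable ell volume (n * π) ((n+1) * π) := by
    intro n
    induction n with
    | zero => simpa using ell_integrable_0_pi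
    | succ k ih =>
      have := ell_shift_up ih
      convert this using 1 <;> push_cast <;> ring
  have Q' : ∀ n : ℕ, IntervalIntegrable ell volume (-((n+1) * π)) (-(n * π)) := by
    intro n
    induction n with
    | zero =>
      have := ell_shift_down ell_integrable_0_pi
      convert this using 1 <;> push_cast <;> ring_nf <;> simp
    | succ k ih =>
      have := ell_shift_down ih
      convert this using 1 <;> push_cast <;> ring
  have S : ∀ n : ℕ, IntervalIntegrable ell volume 0 (n * π) := by
    intro n
    induction n with
    | zero =>
      norm_num
    | succ k ih =>
      have hq : IntervalIntegrable ell volume (k * π) ((k+1) * π) := Q k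
      have : ((k:ℝ)+1) * π = ((k+1 : ℕ) : ℝ) * π := by push_cast; ring
      rw [this] at hq
      exact ih.trans hq
  have T : ∀ n : ℕ, IntervalIntegrable ell volume (-(n * π)) 0 := by
    intro n
    induction n with
    | zero =>
      norm_num
    | succ k ih =>
      have hq : IntervalIntegrable ell volume (-((k+1) * π)) (-(k * π)) := Q' k
      have h2 : -(((k:ℝ)+1) * π) = -(((k+1 : ℕ) : ℝ) * π) := by push_cast; ring
      rw [h2] at hq
      exact hq.trans ih
  obtain ⟨N, hN⟩ := exists_nat_ge (max |a| |b| / π)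
  have hNπ : max |a| |b| ≤ N * π := by
    rw [div_le_iff₀ Real.pi_pos] at hN
    linarith
  have big : IntervalIntegrable ell volume (-(N * π)) (N * π) := (T N).trans (S N)
  apply big.mono_set
  have hm : ∀ x : ℝ, |x| ≤ N * π → x ∈ Set.uIcc (-(N * π)) (N * π) := by
    intro x hx
    have hNp : (0:ℝ) ≤ N * π := by positivity
    rw [Set.uIcc_of_le (by linarith : -(N*π : ℝ) ≤ N*π)]
    exact abs_le.mp hx
  exact Set.uIcc_subset_uIcc (hm a (le_trans (le_max_left _ _) hNπ))
    (hm b (le_trans (le_max_right _ _) hNπ))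


lemma lob_def (x : ℝ) : Lob x = -∫ t in (0:ℝ)..x, ell t := rfl

lemma lob_zero : Lob 0 = 0 := by
  rw [lob_def, intervalIntegral.integral_same, neg_zero]

lemma integral_ell (a b : ℝ) : ∫ t in a..b, ell t = Lob a - Lob b := by
  have h1 := intervalIntegral.integral_add_adjacent_intervals
    (ell_integrable 0 a) (ell_integrable a b)
  rw [lob_def, lob_def]
  linarith

lemma lob_neg (x : ℝ) : Lob (-x) = -Lob x := by
  have h : ∫ t in (0:ℝ)..x, ell (-t) = ∫ t in (-x)..(0:ℝ), ell t := by
    simpa using intervalIntegral.integral_comp_neg (a := (0:ℝ)) (b := x) (f := ell)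
  have h2 : ∫ t in (0:ℝ)..x, ell (-t) = ∫ t in (0:ℝ)..x, ell t := by
    apply intervalIntegral.integral_congr
    intro t _; exact ell_even t
  rw [h2] at h
  have h3 : ∫ t in (-x)..(0:ℝ), ell t = Lob (-x) - Lob 0 := integral_ell _ _
  have h4 : ∫ t in (0:ℝ)..x, ell t = Lob 0 - Lob x := integral_ell _ _
  rw [h3, h4, lob_zero] at h
  linarith

/-- The doubling identity with the `Lob (π/2)` correction term. -/
lemma lob_doubling_aux (x : ℝ) :
    Lob (2*x) = 2 * Lob x + 2 * Lob (x + π/2) - 2 * Lob (π/2) := by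
  have hsub : ∫ u in (0:ℝ)..x, ell (2*u) = (2:ℝ)⁻¹ • ∫ t in (0:ℝ)..(2*x), ell t := by
    have := intervalIntegral.integral_comp_mul_left (a := (0:ℝ)) (b := x) (c := (2:ℝ))
      (f := ell) (by norm_num)
    simpa using this
  -- a.e. splitting of ell(2u)
  have hae : ∫ u in (0:ℝ)..x, ell (2*u) =
      ∫ u in (0:ℝ)..x, (ell u + ell (u + π/2)) := by
    apply intervalIntegral.integral_congr_ae
    have hnull : (volume : Measure ℝ) {u : ℝ | Real.sin u * Real.cos u = 0} = 0 := by
      have hsub2 : {u : ℝ | Real.sin u * Real.cos u = 0} ⊆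
          ⋃ k : ℤ, {u : ℝ | u = k * (π/2)} := by
        intro u hu
        rcases mul_eq_zero.mp hu with h | h
        · obtain ⟨k, hk⟩ := Real.sin_eq_zero_iff.mp h
          exact Set.mem_iUnion.mpr ⟨2*k, by simp only [Set.mem_setOf_eq]; push_cast; rw [← hk]; ring⟩
        · obtain ⟨k, hk⟩ := Real.cos_eq_zero_iff.mp h
          exact Set.mem_iUnion.mpr ⟨2*k+1, by simp only [Set.mem_setOf_eq]; push_cast; rw [hk]; ring⟩
      refine measure_mono_null hsub2 ?_
      refine measure_iUnion_null fun k => ?_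
      simpa using measure_singleton ((k : ℝ) * (π/2))
    rw [MeasureTheory.ae_iff]
    apply measure_mono_null _ hnull
    intro u hu
    simp only [Set.mem_setOf_eq] at hu ⊢
    by_contra hzero
    apply hu
    intro _
    have hs : Real.sin u ≠ 0 := fun h => hzero (by rw [h, zero_mul])
    have hc : Real.cos u ≠ 0 := fun h => hzero (by rw [h, mul_zero])
    have : ell (2*u) = ell u + ell (u + π/2) := by
      rw [ell, ell, ell, Real.sin_two_mul, Real.sin_add_pi_div_two, ← Real.log_mul,
        ← abs_mul]
      · ring_nf
      · simp [abs_eq_zero]; exact hs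
      · simp [abs_eq_zero]; exact hc
    exact this
  have hsplit : ∫ u in (0:ℝ)..x, (ell u + ell (u + π/2)) =
      (∫ u in (0:ℝ)..x, ell u) + ∫ u in (0:ℝ)..x, ell (u + π/2) := by
    apply intervalIntegral.integral_add (ell_integrable 0 x)
    have := (ell_integrable (π/2) (x + π/2)).comp_add_right (π/2)
    simpa using this
  have hshift : ∫ u in (0:ℝ)..x, ell (u + π/2) = ∫ t in (π/2)..(x + π/2), ell t := by
    simpa using intervalIntegral.integral_comp_add_right (a := (0:ℝ)) (b := x)
      (f := ell) (π/2)
  have e1 : ∫ t in (0:ℝ)..(2*x), ell t = Lob 0 - Lob (2*x) := integral_ell _ _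
  have e2 : ∫ u in (0:ℝ)..x, ell u = Lob 0 - Lob x := integral_ell _ _
  have e3 : ∫ t in (π/2)..(x + π/2), ell t = Lob (π/2) - Lob (x + π/2) := integral_ell _ _
  rw [hae, hsplit, hshift, e2, e3, e1, lob_zero] at hsub
  simp only [smul_eq_mul] at hsub
  linarith

lemma lob_pi : Lob π = 0 := by
  have h := lob_doubling_aux (π/2)
  have h2 : 2 * (π/2) = π := by ring
  rw [h2] at h
  have h3 : π/2 + π/2 = π := by ring
  rw [h3] at h
  linarith

lemma lob_periodic (x : ℝ) : Lob (x + π) = Lob x := by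
  have h : ∫ t in x..(x+π), ell t = ∫ t in (0:ℝ)..(0+π), ell t :=
    ell_periodic.intervalIntegral_add_eq x 0
  have h1 : ∫ t in x..(x+π), ell t = Lob x - Lob (x+π) := integral_ell _ _
  have h2 : ∫ t in (0:ℝ)..(0+π), ell t = Lob 0 - Lob (0+π) := integral_ell _ _
  rw [h1, h2, lob_zero, zero_add, lob_pi] at h
  linarith

lemma lob_pi_sub (x : ℝ) : Lob (π - x) = -Lob x := by
  have : π - x = -x + π := by ring
  rw [this, lob_periodic, lob_neg]

lemma lob_pi_half : Lob (π/2) = 0 := by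
  have h := lob_doubling_aux (π/4)
  have h2 : 2 * (π/4) = π/2 := by ring
  rw [h2] at h
  have h3 : Lob (π/4 + π/2) = -Lob (π/4) := by
    have : π/4 + π/2 = π - π/4 := by ring
    rw [this, lob_pi_sub]
  rw [h3] at h
  linarith

lemma lob_doubling (x : ℝ) : Lob (2*x) = 2 * Lob x + 2 * Lob (x + π/2) := by
  have := lob_doubling_aux x
  rw [lob_pi_half] at this
  linarith

/-- `2 Λ(s/2) - Λ(s) = 2 Λ((π - s)/2)` -/
lemma lob_W (s : ℝ) : 2 * Lob (s/2) - Lob s = 2 * Lob ((π - s)/2) := by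
  have h := lob_doubling (s/2)
  have h2 : 2 * (s/2) = s := by ring
  rw [h2] at h
  have h3 : Lob ((π - s)/2) = -Lob (s/2 + π/2) := by
    have e : (π - s)/2 = π - (s/2 + π/2) := by ring
    rw [e, lob_pi_sub]
  rw [h3]
  linarith

lemma lob_pi_third : 3 * Lob (π/3) = 2 * Lob (π/6) := by
  have h := lob_doubling (π/6)
  have h2 : 2 * (π/6) = π/3 := by ring
  rw [h2] at h
  have h3 : Lob (π/6 + π/2) = -Lob (π/3) := by
    have e : π/6 + π/2 = π - π/3 := by ring
    rw [e, lob_pi_sub]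
  rw [h3] at h
  linarith

lemma ae_ne_zero : ∀ᵐ u : ℝ, u ≠ 0 := by
  rw [MeasureTheory.ae_iff]
  have : {u : ℝ | ¬u ≠ 0} = {(0:ℝ)} := by ext u; simp
  rw [this]
  exact measure_singleton 0

lemma sin_ge_half {t : ℝ} (h1 : π/6 ≤ t) (h2 : t ≤ 5*π/6) : 1/2 ≤ Real.sin t := by
  have hpi := Real.pi_pos
  rcases le_total t (π/2) with h | h
  · have := Real.strictMonoOn_sin.monotoneOn (by constructor <;> nlinarith :
      π/6 ∈ Set.Icc (-(π/2)) (π/2)) (by constructor <;> nlinarith :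
      t ∈ Set.Icc (-(π/2)) (π/2)) h1
    rwa [Real.sin_pi_div_six] at this
  · rw [← Real.sin_pi_sub]
    have := Real.strictMonoOn_sin.monotoneOn (by constructor <;> nlinarith :
      π/6 ∈ Set.Icc (-(π/2)) (π/2)) (by constructor <;> nlinarith :
      (π - t) ∈ Set.Icc (-(π/2)) (π/2)) (by linarith)
    rwa [Real.sin_pi_div_six] at this

lemma sin_le_half {t : ℝ} (h1 : 0 ≤ t) (h2 : t ≤ π/6) : Real.sin t ≤ 1/2 := by
  have hpi := Real.pi_pos
  have := Real.strictMonoOn_sin.monotoneOn (by constructor <;> nlinarith :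
    t ∈ Set.Icc (-(π/2)) (π/2)) (by constructor <;> nlinarith :
    π/6 ∈ Set.Icc (-(π/2)) (π/2)) h2
  rwa [Real.sin_pi_div_six] at this

/-- `ell` comparison from sine comparison (both sines positive). -/
lemma ell_le_ell {u v : ℝ} (hu : 0 < Real.sin u) (huv : Real.sin u ≤ Real.sin v) :
    ell u ≤ ell v := by
  rw [ell, ell, abs_of_pos (by linarith : (0:ℝ) < 2 * Real.sin u),
    abs_of_pos (by linarith : (0:ℝ) < 2 * Real.sin v)]
  exact Real.log_le_log (by linarith) (by linarith)

/-- Midpoint lemma (core, `x ≤ y`). -/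
lemma lob_M1_core {x y : ℝ} (hx : 0 ≤ x) (hxy : x ≤ y) (hs : x + y ≤ π) :
    Lob x + Lob y ≤ 2 * Lob ((x+y)/2) := by
  have hpi := Real.pi_pos
  have i1 : IntervalIntegrable (fun u => ell (x + y - u)) volume x ((x+y)/2) := by
    have h := (ell_integrable ((x+y)/2) y).comp_sub_left (x+y)
    have e1 : x + y - (x+y)/2 = (x+y)/2 := by ring
    have e2 : x + y - y = x := by ring
    rw [e1, e2] at h
    exact h.symm
  have i2 : IntervalIntegrable ell volume x ((x+y)/2) := ell_integrable _ _
  have key : ∫ u in x..((x+y)/2), (ell (x + y - u) - ell u) =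
      2 * Lob ((x+y)/2) - Lob x - Lob y := by
    rw [intervalIntegral.integral_sub i1 i2]
    have hA : ∫ u in x..((x+y)/2), ell (x + y - u) = Lob ((x+y)/2) - Lob y := by
      have h := intervalIntegral.integral_comp_sub_left (a := x) (b := (x+y)/2)
        (f := ell) (x+y)
      have e1 : x + y - (x+y)/2 = (x+y)/2 := by ring
      have e2 : x + y - x = y := by ring
      rw [e1, e2] at h
      rw [h, integral_ell]
    have hB : ∫ u in x..((x+y)/2), ell u = Lob x - Lob ((x+y)/2) := integral_ell _ _
    rw [hA, hB]; ring
  have hnn : 0 ≤ ∫ u in x..((x+y)/2), (ell (x + y - u) - ell u) := by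
    apply intervalIntegral.integral_nonneg_of_ae_restrict (by linarith)
    filter_upwards [MeasureTheory.ae_restrict_mem measurableSet_Icc,
      MeasureTheory.ae_restrict_of_ae ae_ne_zero] with u hu hu0
    have hu1 : 0 < u := lt_of_le_of_ne (le_trans hx hu.1) (Ne.symm hu0)
    have hu2 : u ≤ (x+y)/2 := hu.2
    have hsinu : 0 < Real.sin u :=
      Real.sin_pos_of_pos_of_lt_pi hu1 (by linarith)
    have hcomp : Real.sin u ≤ Real.sin (x + y - u) := by
      have := Real.sin_sub_sin (x + y - u) u
      have h1 : 0 ≤ Real.sin ((x + y - u - u)/2) :=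
        Real.sin_nonneg_of_nonneg_of_le_pi (by linarith) (by linarith)
      have h2 : 0 ≤ Real.cos ((x + y - u + u)/2) := by
        apply Real.cos_nonneg_of_mem_Icc
        constructor <;> [linarith; linarith]
      nlinarith
    have hee := ell_le_ell hsinu hcomp
    simp only [Pi.zero_apply]
    linarith
  linarith [key ▸ hnn]

lemma lob_M1 {x y : ℝ} (hx : 0 ≤ x) (hy : 0 ≤ y) (hs : x + y ≤ π) :
    Lob x + Lob y ≤ 2 * Lob ((x+y)/2) := by
  rcases le_total x y with h | h
  · exact lob_M1_core hx h hs
  · have := lob_M1_core hy h (by linarith)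
    have e : (y+x)/2 = (x+y)/2 := by ring
    rw [e] at this
    linarith

/-- Raw subadditivity: `Λ(x+y) ≤ Λx + Λy` when `2x + y ≤ π`. -/
lemma lob_M3raw {x y : ℝ} (hx : 0 ≤ x) (hy : 0 ≤ y) (h : 2*x + y ≤ π) :
    Lob (x+y) ≤ Lob x + Lob y := by
  have hpi := Real.pi_pos
  rcases eq_or_lt_of_le hx with rfl | hx0
  · simp [lob_zero]
  have i1 : IntervalIntegrable (fun u => ell (u + y)) volume 0 x := by
    have h2 := (ell_integrable y (x+y)).comp_add_right y
    simpa using h2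
  have i2 : IntervalIntegrable ell volume 0 x := ell_integrable _ _
  have key : ∫ u in (0:ℝ)..x, (ell (u + y) - ell u) =
      Lob x + Lob y - Lob (x+y) := by
    rw [intervalIntegral.integral_sub i1 i2]
    have hA : ∫ u in (0:ℝ)..x, ell (u + y) = Lob y - Lob (x+y) := by
      have h2 := intervalIntegral.integral_comp_add_right (a := (0:ℝ)) (b := x)
        (f := ell) y
      rw [h2, zero_add, integral_ell]
    have hB : ∫ u in (0:ℝ)..x, ell u = Lob 0 - Lob x := integral_ell _ _
    rw [hA, hB, lob_zero]; ring
  have hnn : 0 ≤ ∫ u in (0:ℝ)..x, (ell (u + y) - ell u) := by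
    apply intervalIntegral.integral_nonneg_of_ae_restrict (by linarith)
    filter_upwards [MeasureTheory.ae_restrict_mem measurableSet_Icc,
      MeasureTheory.ae_restrict_of_ae ae_ne_zero] with u hu hu0
    have hu1 : 0 < u := lt_of_le_of_ne hu.1 (Ne.symm hu0)
    have hu2 : u ≤ x := hu.2
    have hsinu : 0 < Real.sin u :=
      Real.sin_pos_of_pos_of_lt_pi hu1 (by linarith)
    have hcomp : Real.sin u ≤ Real.sin (u + y) := by
      have := Real.sin_sub_sin (u + y) u
      have h1 : 0 ≤ Real.sin ((u + y - u)/2) :=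
        Real.sin_nonneg_of_nonneg_of_le_pi (by linarith) (by linarith)
      have h2 : 0 ≤ Real.cos ((u + y + u)/2) := by
        apply Real.cos_nonneg_of_mem_Icc
        constructor <;> [linarith; linarith]
      nlinarith
    have hee := ell_le_ell hsinu hcomp
    simp only [Pi.zero_apply]
    linarith
  linarith [key ▸ hnn]

/-- Subadditivity on `[0, π]`. -/
lemma lob_M3 {x y : ℝ} (hx : 0 ≤ x) (hy : 0 ≤ y) (hs : x + y ≤ π) :
    Lob (x+y) ≤ Lob x + Lob y := by
  rcases le_or_gt (2*y + x) π with h | h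
  · have h2 := lob_M3raw hy hx h
    have e : y + x = x + y := by ring
    rw [e] at h2
    linarith
  · have hg : (0:ℝ) ≤ π - x - y := by linarith
    have h2 := lob_M3raw hg hx (by linarith)
    have e : π - x - y + x = π - y := by ring
    rw [e, lob_pi_sub] at h2
    have e2 : Lob (π - x - y) = -Lob (x+y) := by
      have e3 : π - x - y = π - (x+y) := by ring
      rw [e3, lob_pi_sub]
    rw [e2] at h2
    linarith

/-- Superadditivity when the sum is in `[π, 2π]`. -/
lemma lob_M2 {x y : ℝ} (hx : 0 ≤ x) (hx' : x ≤ π) (hy : 0 ≤ y) (hy' : y ≤ π)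
    (hs : π ≤ x + y) : Lob x + Lob y ≤ Lob (x+y) := by
  have h2 := lob_M3 (x := π - x) (y := π - y) (by linarith) (by linarith) (by linarith)
  rw [lob_pi_sub, lob_pi_sub] at h2
  have e : π - x + (π - y) = π - (x + y) + π := by ring
  rw [e, lob_periodic, lob_pi_sub] at h2
  linarith

lemma my_integral_nonpos {f : ℝ → ℝ} {a b : ℝ} (hab : a ≤ b)
    (h : ∀ u ∈ Set.Icc a b, f u ≤ 0) : ∫ u in a..b, f u ≤ 0 := by
  have h2 := intervalIntegral.integral_nonneg (f := fun u => -f u) (μ := volume) hab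
    (fun u hu => by simpa using h u hu)
  rw [intervalIntegral.integral_neg] at h2
  linarith

lemma lob_antitone {a b : ℝ} (h6 : π/6 ≤ a) (hab : a ≤ b) (h56 : b ≤ 5*π/6) :
    Lob b ≤ Lob a := by
  have h : ∫ t in a..b, ell t = Lob a - Lob b := integral_ell _ _
  have hnn : 0 ≤ ∫ t in a..b, ell t := by
    apply intervalIntegral.integral_nonneg hab
    intro t ht
    have h1 : 1/2 ≤ Real.sin t := sin_ge_half (le_trans h6 ht.1) (le_trans ht.2 h56)
    apply Real.log_nonneg
    rw [abs_of_pos (by linarith : (0:ℝ) < 2 * Real.sin t)]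
    linarith
  linarith

lemma lob_mono_low {a b : ℝ} (h0 : 0 ≤ a) (hab : a ≤ b) (h6 : b ≤ π/6) :
    Lob a ≤ Lob b := by
  have h : ∫ t in a..b, ell t = Lob a - Lob b := integral_ell _ _
  have hnp : ∫ t in a..b, ell t ≤ 0 := by
    apply my_integral_nonpos hab
    intro t ht
    have h1 : Real.sin t ≤ 1/2 := sin_le_half (le_trans h0 ht.1) (le_trans ht.2 h6)
    have h2 : 0 ≤ Real.sin t := by
      apply Real.sin_nonneg_of_nonneg_of_le_pi (le_trans h0 ht.1)
      have := Real.pi_gt_three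
      linarith [le_trans ht.2 h6]
    apply Real.log_nonpos (abs_nonneg _)
    rw [abs_of_nonneg (by linarith : (0:ℝ) ≤ 2 * Real.sin t)]
    linarith
  linarith

lemma lob_max {x : ℝ} (h0 : 0 ≤ x) (h : x ≤ 5*π/6) : Lob x ≤ Lob (π/6) := by
  rcases le_total x (π/6) with h1 | h1
  · exact lob_mono_low h0 h1 le_rfl
  · exact lob_antitone le_rfl h1 h

lemma lob_nonneg {x : ℝ} (h0 : 0 ≤ x) (h : x ≤ π/2) : 0 ≤ Lob x := by
  have hpi := Real.pi_pos
  rcases le_total x (π/6) with h1 | h1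
  · have := lob_mono_low le_rfl h0 h1
    rwa [lob_zero] at this
  · have := lob_antitone h1 h (by linarith)
    rwa [lob_pi_half] at this

/-- rearranged doubling: `Λ(s) + 2 Λ((π-s)/2) = 2 Λ(s/2)` -/
lemma lob_WW (s : ℝ) : Lob s + 2 * Lob ((π - s)/2) = 2 * Lob (s/2) := by
  have := lob_W s
  linarith

/-- THE sharp lemma: `3 Λ(π/4-τ) + Λ(π/4+3τ) ≤ 4 Λ(π/4)` for `|τ| ≤ π/12`. -/
lemma lob_P {τ : ℝ} (h1 : -(π/12) ≤ τ) (h2 : τ ≤ π/12) :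
    3 * Lob (π/4 - τ) + Lob (π/4 + 3*τ) ≤ 4 * Lob (π/4) := by
  have hpi := Real.pi_pos
  have i1 : IntervalIntegrable (fun u => ell (π/4 + u)) volume 0 (3*τ) := by
    have h := (ell_integrable (π/4) (π/4 + 3*τ)).comp_add_right (π/4)
    have e1 : π/4 - π/4 = (0:ℝ) := by ring
    have e2 : π/4 + 3*τ - π/4 = 3*τ := by ring
    rw [e1, e2] at h
    have he : (fun u => ell (u + π/4)) = fun u => ell (π/4 + u) := by
      funext u; rw [add_comm]
    rwa [he] at h
  have i2 : IntervalIntegrable (fun u => ell (π/4 - u/3)) volume 0 (3*τ) := by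
    have h := ((ell_integrable (π/4) (π/4 - τ)).comp_mul_left (c := -1/3)).comp_add_right
      (-3*π/4)
    have he : (fun x => (fun x => ell (-1/3 * x)) (x + -3*π/4)) =
        fun u => ell (π/4 - u/3) := by
      funext u
      exact congrArg ell (by ring)
    rw [he] at h
    have e1 : π/4 / (-1/3) - -3*π/4 = (0:ℝ) := by ring
    have e2 : (π/4 - τ) / (-1/3) - -3*π/4 = 3*τ := by ring
    rwa [e1, e2] at h
  have hA : ∫ u in (0:ℝ)..(3*τ), ell (π/4 + u) = Lob (π/4) - Lob (π/4 + 3*τ) := by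
    have he : (fun u => ell (π/4 + u)) = fun u => ell (u + π/4) := by
      funext u; rw [add_comm]
    rw [he]
    have h := intervalIntegral.integral_comp_add_right (a := (0:ℝ)) (b := 3*τ)
      (f := ell) (π/4)
    rw [h, zero_add, integral_ell]
    have e : 3*τ + π/4 = π/4 + 3*τ := by ring
    rw [e]
  have hB : ∫ u in (0:ℝ)..(3*τ), ell (π/4 - u/3) =
      -3 * (Lob (π/4) - Lob (π/4 - τ)) := by
    have he : (fun u => ell (π/4 - u/3)) = fun u => ell ((-1/3) * u + π/4) := by
      funext u; exact congrArg ell (by ring)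
    rw [he]
    have h := intervalIntegral.integral_comp_mul_add (a := (0:ℝ)) (b := 3*τ)
      (f := ell) (c := -1/3) (by norm_num) (π/4)
    rw [h]
    have e1 : (-1/3 : ℝ) * 0 + π/4 = π/4 := by ring
    have e2 : (-1/3 : ℝ) * (3*τ) + π/4 = π/4 - τ := by ring
    rw [e1, e2, integral_ell]
    simp only [smul_eq_mul]
    ring
  have key : ∫ u in (0:ℝ)..(3*τ), (ell (π/4 + u) - ell (π/4 - u/3)) =
      4 * Lob (π/4) - Lob (π/4 + 3*τ) - 3 * Lob (π/4 - τ) := by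
    rw [intervalIntegral.integral_sub i1 i2, hA, hB]
    ring
  have hnn : 0 ≤ ∫ u in (0:ℝ)..(3*τ), (ell (π/4 + u) - ell (π/4 - u/3)) := by
    rcases le_total 0 τ with hτ | hτ
    · apply intervalIntegral.integral_nonneg (by linarith)
      intro u hu
      have hu0 : 0 ≤ u := hu.1
      have hu1 : u ≤ 3*τ := hu.2
      have hsmall : 0 < Real.sin (π/4 - u/3) := by
        apply Real.sin_pos_of_pos_of_lt_pi <;> nlinarith
      have hcomp : Real.sin (π/4 - u/3) ≤ Real.sin (π/4 + u) := by
        apply Real.strictMonoOn_sin.monotoneOn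
        · constructor <;> nlinarith
        · constructor <;> nlinarith
        · nlinarith
      linarith [ell_le_ell hsmall hcomp]
    · have hsym := intervalIntegral.integral_symm (μ := volume)
        (f := fun u => ell (π/4 + u) - ell (π/4 - u/3)) (3*τ) 0
      have hle : ∫ u in (3*τ)..(0:ℝ), (ell (π/4 + u) - ell (π/4 - u/3)) ≤ 0 := by
        apply my_integral_nonpos (by linarith)
        intro u hu
        have hu0 : 3*τ ≤ u := hu.1
        have hu1 : u ≤ 0 := hu.2
        have hbig : 0 < Real.sin (π/4 - u/3) := by
          apply Real.sin_pos_of_pos_of_lt_pi <;> nlinarith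
        have hbig2 : 1 ≤ 2 * Real.sin (π/4 - u/3) := by
          have : Real.sin (π/4) ≤ Real.sin (π/4 - u/3) := by
            apply Real.strictMonoOn_sin.monotoneOn
            · constructor <;> nlinarith
            · constructor <;> nlinarith
            · nlinarith
          rw [Real.sin_pi_div_four] at this
          nlinarith [Real.sq_sqrt (by norm_num : (2:ℝ) ≥ 0), Real.sqrt_nonneg 2]
        rcases eq_or_lt_of_le (Real.sin_nonneg_of_nonneg_of_le_pi
          (by nlinarith : (0:ℝ) ≤ π/4 + u) (by nlinarith) : 0 ≤ Real.sin (π/4 + u))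
          with hz | hz
        · -- sin (π/4 + u) = 0 : ell = log 0 = 0 ≤ ell (π/4 - u/3)
          have : ell (π/4 + u) = 0 := by
            rw [ell, ← hz, mul_zero, abs_zero, Real.log_zero]
          rw [this]
          have : 0 ≤ ell (π/4 - u/3) := by
            apply Real.log_nonneg
            rw [abs_of_pos (by linarith : (0:ℝ) < 2 * Real.sin (π/4 - u/3))]
            linarith
          linarith
        · have hcomp : Real.sin (π/4 + u) ≤ Real.sin (π/4 - u/3) := by
            apply Real.strictMonoOn_sin.monotoneOn
            · constructor <;> nlinarith
            · constructor <;> nlinarith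
            · nlinarith
          linarith [ell_le_ell hz hcomp]
      linarith
  linarith [key ▸ hnn]

/-- `∫₀ᶜ log(2t) dt = c log(2c) - c` for `0 < c ≤ 1`. -/
lemma integral_log_two_mul {c : ℝ} (hc : 0 < c) (hc1 : c ≤ 1) :
    ∫ t in (0:ℝ)..c, Real.log (2*t) = c * Real.log (2*c) - c := by
  have hint : IntervalIntegrable (fun t => Real.log (2*t)) volume 0 c := by
    have h := (intLog (by linarith : (0:ℝ) ≤ 2*c) (by linarith)).comp_mul_left (c := 2)
    simpa using h
  have key := intervalIntegral.integral_eq_sub_of_hasDeriv_right_of_le hc.le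
    (f := fun t => t * Real.log 2 + (t * Real.log t - t))
    (f' := fun t => Real.log (2*t)) ?_ ?_ hint
  · have h2 : Real.log (2*c) = Real.log 2 + Real.log c :=
      Real.log_mul (by norm_num) (ne_of_gt hc)
    rw [key, h2]; ring
  · apply Continuous.continuousOn
    exact (continuous_id.mul continuous_const).add
      (Real.continuous_mul_log.sub continuous_id)
  · intro t ht
    have ht0 : 0 < t := ht.1
    have hd : HasDerivAt (fun t : ℝ => t * Real.log 2 + (t * Real.log t - t))
        (Real.log 2 + Real.log t) t := by
      have d1 : HasDerivAt (fun t : ℝ => t * Real.log 2) (Real.log 2) t := by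
        simpa using (hasDerivAt_id t).mul_const (Real.log 2)
      have d2 : HasDerivAt (fun t : ℝ => t * Real.log t - t) (Real.log t) t := by
        have := ((hasDerivAt_id t).mul (Real.hasDerivAt_log (ne_of_gt ht0))).sub
          (hasDerivAt_id t)
        exact this.congr_deriv (by simp [ne_of_gt ht0])
      exact d1.add d2
    have he : Real.log 2 + Real.log t = Real.log (2*t) :=
      (Real.log_mul (by norm_num) (ne_of_gt ht0)).symm
    show HasDerivWithinAt _ (Real.log (2*t)) (Set.Ioi t) t
    rw [← he]
    exact hd.hasDerivWithinAt

lemma pi_bounds : 3.141592 ≤ π ∧ π ≤ 3.141593 :=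
  ⟨Real.pi_gt_d6.le, Real.pi_lt_d6.le⟩

lemma log_pi_half_ub : Real.log (π/2) ≤ 0.4784 := by
  have hpi := pi_bounds
  have h0 : (0:ℝ) < π/2 := by nlinarith [hpi.1]
  have e1 : Real.log (π/2) = 4 * Real.log (Real.sqrt (Real.sqrt (π/2))) := by
    rw [Real.log_sqrt (Real.sqrt_nonneg _), Real.log_sqrt h0.le]
    ring
  have h1 : Real.sqrt (π/2) ≤ 1.2534 := by
    rw [show (1.2534:ℝ) = Real.sqrt (1.2534^2) by
      rw [Real.sqrt_sq (by norm_num)]]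
    apply Real.sqrt_le_sqrt
    nlinarith [hpi.2]
  have h2 : Real.sqrt (Real.sqrt (π/2)) ≤ 1.1196 := by
    rw [show (1.1196:ℝ) = Real.sqrt (1.1196^2) by
      rw [Real.sqrt_sq (by norm_num)]]
    apply Real.sqrt_le_sqrt
    nlinarith
  have h3 : 0 < Real.sqrt (Real.sqrt (π/2)) := by
    apply Real.sqrt_pos.mpr
    apply Real.sqrt_pos.mpr h0
  have h4 := Real.log_le_sub_one_of_pos h3
  rw [e1]
  nlinarith

lemma log_pi_third_lb : 0.045 ≤ Real.log (π/3) := by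
  have hpi := pi_bounds
  have h0 : (0:ℝ) < π/3 := by nlinarith [hpi.1]
  have h1 : (0:ℝ) < 3/π := by positivity
  have h2 := Real.log_le_sub_one_of_pos h1
  have h3 : Real.log (3/π) = -Real.log (π/3) := by
    rw [show (3:ℝ)/π = (π/3)⁻¹ by rw [inv_div], Real.log_inv]
  rw [h3] at h2
  have h4 : 3/π ≤ 0.955 := by
    rw [div_le_iff₀ (by nlinarith [hpi.1])]
    nlinarith [hpi.1]
  linarith

/-- certified lower bound for `Λ(π/4)`. -/
lemma lob_quarter_lb :
    π/4 * (1 - Real.log (π/2)) + (π/4)^3/18 - (π/4)^4 * 5/384 ≤ Lob (π/4) := by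
  have hpi := pi_bounds
  have hc0 : (0:ℝ) < π/4 := by nlinarith [hpi.1]
  have hc1 : (π:ℝ)/4 ≤ 1 := by nlinarith [hpi.2]
  have hmono : ∫ t in (0:ℝ)..(π/4), ell t ≤
      ∫ t in (0:ℝ)..(π/4), (Real.log (2*t) - t^2/6 + 5*t^3/96) := by
    apply intervalIntegral.integral_mono_on hc0.le (ell_integrable 0 (π/4))
    · apply IntervalIntegrable.add
      · apply IntervalIntegrable.sub
        · have h := (intLog (by linarith : (0:ℝ) ≤ 2*(π/4)) (by linarith)).comp_mul_left (c := 2)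
          simpa using h
        · apply ContinuousOn.intervalIntegrable
          exact (continuous_pow 2).continuousOn.div_const 6
      · apply ContinuousOn.intervalIntegrable
        exact ((continuous_const.mul (continuous_pow 3)).div_const 96).continuousOn
    · intro t ht
      rcases eq_or_lt_of_le ht.1 with rfl | ht0
      · simp [ell, Real.log_zero]
      have ht1 : t ≤ π/4 := ht.2
      have htle1 : t ≤ 1 := le_trans ht1 hc1
      have hsin_pos : 0 < Real.sin t :=
        Real.sin_pos_of_pos_of_lt_pi ht0 (by nlinarith [hpi.1])
      -- sin t ≤ t - t^3/6 + 5 t^4/96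
      have hsb := Real.sin_bound (x := t) (by rw [abs_of_pos ht0]; exact htle1)
      rw [abs_of_pos ht0] at hsb
      have hsin_ub : Real.sin t ≤ t - t^3/6 + t^4 * (5/96) := by
        have := abs_le.mp hsb
        nlinarith [this.2, mul_nonneg (pow_nonneg ht0.le 4) (sub_nonneg.mpr htle1)]
      have hq_pos : 0 < t * (1 - t^2/6 + 5*t^3/96) := by nlinarith
      have step1 : ell t ≤ Real.log (2 * (t * (1 - t^2/6 + 5*t^3/96))) := by
        rw [ell, abs_of_pos (by linarith : (0:ℝ) < 2 * Real.sin t)]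
        apply Real.log_le_log (by linarith)
        nlinarith
      have step2 : Real.log (2 * (t * (1 - t^2/6 + 5*t^3/96))) =
          Real.log (2*t) + Real.log (1 - t^2/6 + 5*t^3/96) := by
        rw [show (2:ℝ) * (t * (1 - t^2/6 + 5*t^3/96)) =
          (2*t) * (1 - t^2/6 + 5*t^3/96) by ring]
        exact Real.log_mul (by positivity) (by nlinarith)
      have step3 : Real.log (1 - t^2/6 + 5*t^3/96) ≤ -(t^2/6 - 5*t^3/96) := by
        have := Real.log_le_sub_one_of_pos (x := 1 - t^2/6 + 5*t^3/96) (by nlinarith)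
        linarith
      linarith
  have heval : ∫ t in (0:ℝ)..(π/4), (Real.log (2*t) - t^2/6 + 5*t^3/96) =
      (π/4) * Real.log (2*(π/4)) - π/4 - (π/4)^3/18 + 5*(π/4)^4/384 := by
    rw [intervalIntegral.integral_add, intervalIntegral.integral_sub]
    · rw [integral_log_two_mul hc0 hc1]
      rw [show (fun t : ℝ => t^2/6) = fun t : ℝ => (1/6 : ℝ) * t^2 by funext t; ring]
      rw [show (fun t : ℝ => 5*t^3/96) = fun t : ℝ => (5/96 : ℝ) * t^3 by
        funext t; ring]
      rw [intervalIntegral.integral_const_mul, intervalIntegral.integral_const_mul,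
        integral_pow, integral_pow]
      norm_num
      ring
    · have h := (intLog (by linarith : (0:ℝ) ≤ 2*(π/4)) (by linarith)).comp_mul_left (c := 2)
      simpa using h
    · apply ContinuousOn.intervalIntegrable
      exact (continuous_pow 2).continuousOn.div_const 6
    · apply IntervalIntegrable.sub
      · have h := (intLog (by linarith : (0:ℝ) ≤ 2*(π/4)) (by linarith)).comp_mul_left (c := 2)
        simpa using h
      · apply ContinuousOn.intervalIntegrable
        exact (continuous_pow 2).continuousOn.div_const 6
    · apply ContinuousOn.intervalIntegrable
      exact ((continuous_const.mul (continuous_pow 3)).div_const 96).continuousOn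
  have hlob : Lob (π/4) = -∫ t in (0:ℝ)..(π/4), ell t := rfl
  rw [hlob]
  rw [heval] at hmono
  have e2 : (2:ℝ)*(π/4) = π/2 := by ring
  rw [e2] at hmono
  linarith

/-- certified upper bound for `Λ(π/6)`. -/
lemma lob_sixth_ub :
    Lob (π/6) ≤ π/6 * (1 - Real.log (π/3)) + 0.269 * (π/6)^3 / 3 := by
  have hpi := pi_bounds
  have hc0 : (0:ℝ) < π/6 := by nlinarith [hpi.1]
  have hc1 : (π:ℝ)/6 ≤ 1 := by nlinarith [hpi.2]
  have hmono : ∫ t in (0:ℝ)..(π/6), (Real.log (2*t) - 0.269 * t^2) ≤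
      ∫ t in (0:ℝ)..(π/6), ell t := by
    apply intervalIntegral.integral_mono_on hc0.le
    · apply IntervalIntegrable.sub
      · have h := (intLog (by linarith : (0:ℝ) ≤ 2*(π/6)) (by linarith)).comp_mul_left (c := 2)
        simpa using h
      · apply ContinuousOn.intervalIntegrable
        exact (continuous_const.mul (continuous_pow 2)).continuousOn
    · exact ell_integrable 0 (π/6)
    · intro t ht
      rcases eq_or_lt_of_le ht.1 with rfl | ht0
      · simp [ell, Real.log_zero]
      have ht1 : t ≤ π/6 := ht.2
      have htle1 : t ≤ 1 := le_trans ht1 hc1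
      have hsin_pos : 0 < Real.sin t :=
        Real.sin_pos_of_pos_of_lt_pi ht0 (by nlinarith [hpi.1])
      have hcube := Real.sin_gt_sub_cube ht0
      have hx : t^2/4 ≤ 0.0686 := by nlinarith [hpi.2]
      have hq_pos : (0:ℝ) < 1 - t^2/4 := by nlinarith
      have step1 : Real.log (2*t) + Real.log (1 - t^2/4) ≤ ell t := by
        rw [ell, abs_of_pos (by linarith : (0:ℝ) < 2 * Real.sin t),
          ← Real.log_mul (by positivity) (ne_of_gt hq_pos)]
        apply Real.log_le_log (by positivity)
        nlinarith
      have step2 : -Real.log (1 - t^2/4) ≤ 0.269 * t^2 := by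
        have hinv : Real.log ((1 - t^2/4)⁻¹) ≤ (1 - t^2/4)⁻¹ - 1 :=
          Real.log_le_sub_one_of_pos (by positivity)
        rw [Real.log_inv] at hinv
        have h3 : (1 - t^2/4)⁻¹ ≤ 1 + 0.269 * t^2 := by
          rw [inv_eq_one_div, div_le_iff₀ hq_pos]
          nlinarith [sq_nonneg t]
        linarith
      linarith
  have heval : ∫ t in (0:ℝ)..(π/6), (Real.log (2*t) - 0.269 * t^2) =
      (π/6) * Real.log (2*(π/6)) - π/6 - 0.269 * (π/6)^3 / 3 := by
    rw [intervalIntegral.integral_sub]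
    · rw [integral_log_two_mul hc0 hc1, intervalIntegral.integral_const_mul,
        integral_pow]
      norm_num
      ring
    · have h := (intLog (by linarith : (0:ℝ) ≤ 2*(π/6)) (by linarith)).comp_mul_left (c := 2)
      simpa using h
    · apply ContinuousOn.intervalIntegrable
      exact (continuous_const.mul (continuous_pow 2)).continuousOn
  have hlob : Lob (π/6) = -∫ t in (0:ℝ)..(π/6), ell t := rfl
  rw [hlob]
  rw [heval] at hmono
  have e2 : (2:ℝ)*(π/6) = π/3 := by ring
  rw [e2] at hmono
  linarith

/-- The numeric comparison `6 Λ(π/6) ≤ 8 Λ(π/4)`. -/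
lemma lob_N : 6 * Lob (π/6) ≤ 8 * Lob (π/4) := by
  have h1 := lob_quarter_lb
  have h2 := lob_sixth_ub
  have h3 := log_pi_half_ub
  have h4 := log_pi_third_lb
  have hpi := pi_bounds
  have hp1 : (3.141592:ℝ) ≤ π := hpi.1
  have hp2 : π ≤ (3.141593:ℝ) := hpi.2
  have hq3 : (0.484472:ℝ) ≤ (π/4)^3 := by
    have h := pow_le_pow_left₀ (by norm_num : (0:ℝ) ≤ 3.141592/4)
      (by linarith : (3.141592:ℝ)/4 ≤ π/4) 3
    norm_num at h
    linarith
  have hq4 : (π/4)^4 ≤ 0.380505 := by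
    have h := pow_le_pow_left₀ (by positivity : (0:ℝ) ≤ π/4)
      (by linarith : π/4 ≤ (3.141593:ℝ)/4) 4
    norm_num at h
    linarith
  have hs3 : (π/6)^3 ≤ 0.143548 := by
    have h := pow_le_pow_left₀ (by positivity : (0:ℝ) ≤ π/6)
      (by linarith : π/6 ≤ (3.141593:ℝ)/6) 3
    norm_num at h
    linarith
  have hL2 : (0.5216:ℝ) ≤ 1 - Real.log (π/2) := by linarith
  have hL3 : 1 - Real.log (π/3) ≤ 0.955 := by linarith
  have hL3' : (0:ℝ) ≤ 1 - Real.log (π/3) := by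
    have := Real.log_le_sub_one_of_pos (by positivity : (0:ℝ) < π/3)
    nlinarith
  have hA : (0.40966:ℝ) ≤ π/4 * (1 - Real.log (π/2)) := by nlinarith
  have hB : π/6 * (1 - Real.log (π/3)) ≤ 0.5000370 := by nlinarith
  linarith

lemma lob_pair_le {x y : ℝ} (hx : 0 ≤ x) (hy : 0 ≤ y) (hs : x + y ≤ π) :
    Lob x + Lob y - Lob (x+y) ≤ 2 * Lob ((π - (x+y))/2) := by
  have h := lob_M1 hx hy hs
  have hW := lob_W (x+y)
  linarith

lemma lob_pair_nonpos {x y : ℝ} (hx : 0 ≤ x) (hx' : x ≤ π) (hy : 0 ≤ y)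
    (hy' : y ≤ π) (hs : π ≤ x + y) : Lob x + Lob y - Lob (x+y) ≤ 0 := by
  linarith [lob_M2 hx hx' hy hy' hs]

lemma lob_pair_max {x y : ℝ} (hx : 0 ≤ x) (hx' : x ≤ π) (hy : 0 ≤ y) (hy' : y ≤ π) :
    Lob x + Lob y - Lob (x+y) ≤ 2 * Lob (π/6) := by
  have hpi := Real.pi_pos
  rcases le_or_gt (x+y) π with h | h
  · have h1 := lob_pair_le hx hy h
    have h2 : Lob ((π - (x+y))/2) ≤ Lob (π/6) := lob_max (by linarith) (by linarith)
    linarith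
  · have h1 := lob_pair_nonpos hx hx' hy hy' h.le
    have h2 : 0 ≤ Lob (π/6) := lob_nonneg (by linarith) (by linarith)
    linarith

lemma lob_fourth {a σ' : ℝ} (ha : 0 ≤ a) (ha' : a ≤ π) (hσ : 0 ≤ σ')
    (hσ' : σ' ≤ π) : Lob a + Lob σ' - Lob (a + σ') ≤ 2 * Lob (σ'/2) := by
  have hpi := Real.pi_pos
  rcases le_or_gt (a + σ') π with h | h
  · have h1 := lob_M1 (x := a) (y := π - (a + σ')) ha (by linarith) (by linarith)
    have e : (a + (π - (a + σ')))/2 = (π - σ')/2 := by ring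
    rw [e] at h1
    have h2 : Lob (π - (a + σ')) = -Lob (a + σ') := lob_pi_sub _
    have h3 := lob_WW σ'
    linarith
  · have h1 := lob_M2 ha ha' hσ hσ' h.le
    have h2 : 0 ≤ Lob (σ'/2) := lob_nonneg (by linarith) (by linarith)
    linarith

lemma lob_jensen3 {u1 u2 u3 : ℝ} (h1 : 0 ≤ u1) (h1' : u1 ≤ π/2)
    (h2 : 0 ≤ u2) (h2' : u2 ≤ π/2) (h3 : 0 ≤ u3) (h3' : u3 ≤ π/2) :
    Lob u1 + Lob u2 + Lob u3 ≤ 3 * Lob ((u1+u2+u3)/3) := by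
  have hpi := Real.pi_pos
  set m := (u1+u2+u3)/3 with hm
  have hm0 : 0 ≤ m := by rw [hm]; linarith
  have hm' : m ≤ π/2 := by rw [hm]; linarith
  have a1 := lob_M1 h1 h2 (by linarith)
  have a2 := lob_M1 h3 hm0 (by linarith)
  have a3 := lob_M1 (x := (u1+u2)/2) (y := (u3+m)/2) (by linarith) (by linarith)
    (by linarith)
  have e : ((u1+u2)/2 + (u3+m)/2)/2 = m := by rw [hm]; ring
  rw [e] at a3
  linarith

end LobProof

/-- the key inequality in the new variables a₁,…,a₄,b₁,b₂,b₃. -/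
theorem L_le_v8 (a1 a2 a3 a4 b1 b2 b3 : ℝ)
    (ha1 : 0 ≤ a1) (ha1' : a1 ≤ Real.pi)
    (ha2 : 0 ≤ a2) (ha2' : a2 ≤ Real.pi)
    (ha3 : 0 ≤ a3) (ha3' : a3 ≤ Real.pi)
    (ha4 : 0 ≤ a4) (ha4' : a4 ≤ Real.pi)
    (hb1 : 0 ≤ b1) (hb1' : b1 ≤ Real.pi)
    (hb2 : 0 ≤ b2) (hb2' : b2 ≤ Real.pi)
    (hb3 : 0 ≤ b3) (hb3' : b3 ≤ Real.pi)
    (hsum : a1 + a2 + a3 + a4 + b1 + b2 + b3 ≤ 2 * Real.pi) :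
    -Lob (a1 + a2 + a3 + a4 + b1 + b2 + b3) + (Lob a1 + Lob a2 + Lob a3 + Lob a4) +
        (Lob b1 + Lob b2 + Lob b3) +
        Lob ((a1 + b1) + (a2 + b2) + (a3 + b3)) -
        Lob (a1 + b1) - Lob (a2 + b2) - Lob (a3 + b3) ≤ 8 * Lob (Real.pi / 4) ∧
      8 * Lob (Real.pi / 4) = v8 := by
  have hpi := Real.pi_pos
  refine ⟨?_, rfl⟩
  set s1 := a1 + b1 with hs1
  set s2 := a2 + b2 with hs2
  set s3 := a3 + b3 with hs3
  set σ := s1 + s2 + s3 with hσ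
  have hs10 : 0 ≤ s1 := by rw [hs1]; linarith
  have hs20 : 0 ≤ s2 := by rw [hs2]; linarith
  have hs30 : 0 ≤ s3 := by rw [hs3]; linarith
  have hσ0 : 0 ≤ σ := by rw [hσ]; linarith
  have hσa4 : a4 + σ ≤ 2*π := by
    rw [hσ, hs1, hs2, hs3]; linarith
  have eS : a1 + a2 + a3 + a4 + b1 + b2 + b3 = a4 + σ := by
    rw [hσ, hs1, hs2, hs3]; ring
  rw [eS]
  -- the three pair bounds (max version, always valid)
  have hmax1 : Lob a1 + Lob b1 - Lob s1 ≤ 2 * Lob (π/6) := by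
    have := lob_pair_max ha1 ha1' hb1 hb1'
    rwa [← hs1] at this
  have hmax2 : Lob a2 + Lob b2 - Lob s2 ≤ 2 * Lob (π/6) := by
    have := lob_pair_max ha2 ha2' hb2 hb2'
    rwa [← hs2] at this
  have hmax3 : Lob a3 + Lob b3 - Lob s3 ≤ 2 * Lob (π/6) := by
    have := lob_pair_max ha3 ha3' hb3 hb3'
    rwa [← hs3] at this
  have hN := lob_N
  rcases le_or_gt σ π with hσπ | hσπ
  · -- CASE A1 : σ ≤ π (hence every sᵢ ≤ π)
    have hs1π : s1 ≤ π := by linarith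
    have hs2π : s2 ≤ π := by linarith
    have hs3π : s3 ≤ π := by linarith
    have hV1 : Lob a1 + Lob b1 - Lob s1 ≤ 2 * Lob ((π - s1)/2) := by
      have := lob_pair_le ha1 hb1 (by rw [← hs1]; exact hs1π)
      rwa [← hs1] at this
    have hV2 : Lob a2 + Lob b2 - Lob s2 ≤ 2 * Lob ((π - s2)/2) := by
      have := lob_pair_le ha2 hb2 (by rw [← hs2]; exact hs2π)
      rwa [← hs2] at this
    have hV3 : Lob a3 + Lob b3 - Lob s3 ≤ 2 * Lob ((π - s3)/2) := by
      have := lob_pair_le ha3 hb3 (by rw [← hs3]; exact hs3π)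
      rwa [← hs3] at this
    have hJ := lob_jensen3 (u1 := (π - s1)/2) (u2 := (π - s2)/2) (u3 := (π - s3)/2)
      (by linarith) (by linarith) (by linarith) (by linarith) (by linarith)
      (by linarith)
    have eu : ((π - s1)/2 + (π - s2)/2 + (π - s3)/2)/3 = π/2 - σ/6 := by
      rw [hσ]; ring
    rw [eu] at hJ
    have hV4 : Lob a4 + Lob σ - Lob (a4 + σ) ≤ 2 * Lob (σ/2) :=
      lob_fourth ha4 ha4' hσ0 hσπ
    have hu3 : Lob (π/2 - σ/6) ≤ Lob (π/3) :=
      lob_antitone (by linarith) (by linarith) (by linarith)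
    have hσ2 : Lob (σ/2) ≤ Lob (π/6) := lob_max (by linarith) (by linarith)
    have h3rd := lob_pi_third
    linarith
  · -- σ > π
    have hσ'0 : 0 ≤ σ - π := by linarith
    have hσ'π : σ - π ≤ π := by linarith
    have hper1 : Lob σ = Lob (σ - π) := by
      have h := lob_periodic (σ - π)
      rw [sub_add_cancel] at h
      exact h
    have hper2 : Lob (a4 + σ) = Lob (a4 + (σ - π)) := by
      have h := lob_periodic (a4 + (σ - π))
      rw [show a4 + (σ - π) + π = a4 + σ by ring] at h
      exact h
    have hV4 : Lob a4 + Lob σ - Lob (a4 + σ) ≤ 2 * Lob ((σ - π)/2) := by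
      have h := lob_fourth ha4 ha4' hσ'0 hσ'π
      rw [hper1, hper2]
      linarith
    by_cases hc : s1 ≤ π ∧ s2 ≤ π ∧ s3 ≤ π
    · -- CASE A2 : Jensen + the sharp lemma
      obtain ⟨hs1π, hs2π, hs3π⟩ := hc
      have hV1 : Lob a1 + Lob b1 - Lob s1 ≤ 2 * Lob ((π - s1)/2) := by
        have := lob_pair_le ha1 hb1 (by rw [← hs1]; exact hs1π)
        rwa [← hs1] at this
      have hV2 : Lob a2 + Lob b2 - Lob s2 ≤ 2 * Lob ((π - s2)/2) := by
        have := lob_pair_le ha2 hb2 (by rw [← hs2]; exact hs2π)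
        rwa [← hs2] at this
      have hV3 : Lob a3 + Lob b3 - Lob s3 ≤ 2 * Lob ((π - s3)/2) := by
        have := lob_pair_le ha3 hb3 (by rw [← hs3]; exact hs3π)
        rwa [← hs3] at this
      have hJ := lob_jensen3 (u1 := (π - s1)/2) (u2 := (π - s2)/2) (u3 := (π - s3)/2)
        (by linarith) (by linarith) (by linarith) (by linarith) (by linarith)
        (by linarith)
      have eu : ((π - s1)/2 + (π - s2)/2 + (π - s3)/2)/3 = π/2 - σ/6 := by
        rw [hσ]; ring
      rw [eu] at hJ
      have hP := lob_P (τ := σ/6 - π/4) (by linarith) (by linarith)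
      have e1 : π/4 - (σ/6 - π/4) = π/2 - σ/6 := by ring
      have e2 : π/4 + 3*(σ/6 - π/4) = (σ - π)/2 := by ring
      rw [e1, e2] at hP
      linarith
    · -- CASE B : some sᵢ > π
      have hσ'2 : Lob ((σ - π)/2) ≤ Lob (π/6) := lob_max (by linarith) (by linarith)
      rcases not_and_or.mp hc with h | h
      · have hk : π ≤ s1 := le_of_not_ge h
        have hV1 : Lob a1 + Lob b1 - Lob s1 ≤ 0 := by
          have := lob_pair_nonpos ha1 ha1' hb1 hb1' (by rw [← hs1]; exact hk)
          rwa [← hs1] at this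
        linarith
      · rcases not_and_or.mp h with h2 | h2
        · have hk : π ≤ s2 := le_of_not_ge h2
          have hV2 : Lob a2 + Lob b2 - Lob s2 ≤ 0 := by
            have := lob_pair_nonpos ha2 ha2' hb2 hb2' (by rw [← hs2]; exact hk)
            rwa [← hs2] at this
          linarith
        · have hk : π ≤ s3 := le_of_not_ge h2
          have hV3 : Lob a3 + Lob b3 - Lob s3 ≤ 0 := by
            have := lob_pair_nonpos ha3 ha3' hb3 hb3' (by rw [← hs3]; exact hk)
            rwa [← hs3] at this
          linarith
end

section
/- Let θ₁,…,θ₆ be real numbers such that π < U_i < 2π for all i ∈ {1,…,4} and 0 < V_j − U_i < π for all i ∈ {1,…,4}, j ∈ {1,2,3}. Then the function Z ↦ F(Z,θ₁,…,θ₆) is strictly concave on the interval (max_i U_i, min(min_j V_j, 2π)), and there exists a unique Z₀ in this open interval such that F(Z₀,θ₁,…,θ₆) ≥ F(Z,θ₁,…,θ₆) for every Z in the closed interval [max_i U_i, min(min_j V_j, 2π)]. -/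
open Real Filter
open MeasureTheory intervalIntegral Topology

noncomputable def LInt (x : ℝ) : ℝ := Real.log |2 * Real.sin x|

lemma LInt_le (x : ℝ) : LInt x ≤ Real.log 2 := by
  unfold LInt
  rcases eq_or_lt_of_le (abs_nonneg (2 * Real.sin x)) with h | h
  · rw [← h, Real.log_zero]; positivity
  · apply Real.log_le_log h
    rw [abs_mul]
    norm_num
    nlinarith [Real.abs_sin_le_one x, abs_nonneg (Real.sin x)]

lemma LInt_measurable : Measurable LInt :=
  Real.measurable_log.comp ((continuous_const.mul Real.continuous_sin).abs.measurable)

lemma LInt_periodic : Function.Periodic LInt Real.pi := by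
  intro x; unfold LInt; rw [Real.sin_add_pi]; simp [abs_mul]

lemma abs_log_le {t : ℝ} (h0 : 0 < t) (h2 : t ≤ 2) : |Real.log t| ≤ 2 * t ^ (-(1/2) : ℝ) := by
  set s : ℝ := t ^ ((1/2) : ℝ) with hs
  have hs0 : 0 < s := Real.rpow_pos_of_pos h0 _
  have hst : s * s = t := by
    rw [hs, ← Real.rpow_add h0]; norm_num
  have hneg : t ^ (-(1/2) : ℝ) = s⁻¹ := by
    rw [hs, ← Real.rpow_neg h0.le]
  rw [hneg]
  rcases le_total t 1 with h1 | h1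
  · have hlog : Real.log t ≤ 0 := Real.log_nonpos h0.le h1
    rw [abs_of_nonpos hlog]
    have : Real.log s⁻¹ ≤ s⁻¹ - 1 := Real.log_le_sub_one_of_pos (by positivity)
    have hls : Real.log t = 2 * Real.log s := by
      rw [← hst, Real.log_mul hs0.ne' hs0.ne']; ring
    rw [Real.log_inv] at this
    have hsinv : 0 < s⁻¹ := by positivity
    nlinarith
  · rw [abs_of_nonneg (Real.log_nonneg h1)]
    have hlt : Real.log t ≤ t - 1 := Real.log_le_sub_one_of_pos h0
    have hsle : s ≤ 3/2 := by nlinarith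
    have : (3/2 : ℝ)⁻¹ ≤ s⁻¹ := by
      exact inv_anti₀ hs0 hsle
    nlinarith [inv_pos.2 hs0]

lemma sin_lower {t : ℝ} (h0 : 0 < t) (h2 : t ≤ Real.pi / 2) : t ≤ 2 * Real.sin t := by
  have h := Real.mul_le_sin h0.le h2
  have hs : 0 ≤ Real.sin t := Real.sin_nonneg_of_nonneg_of_le_pi h0.le
    (by nlinarith [Real.pi_pos])
  have key := mul_le_mul_of_nonneg_left h Real.pi_pos.le
  have hid : Real.pi * (2 / Real.pi * t) = 2 * t := by field_simp
  rw [hid] at key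
  nlinarith [mul_nonneg (sub_nonneg.2 Real.pi_le_four) hs]

lemma LInt_integrableOn_half : IntegrableOn LInt (Set.Ioc 0 (Real.pi/2)) volume := by
  have hmaj : IntegrableOn (fun t => 2 * t ^ (-(1/2) : ℝ) + Real.log 2)
      (Set.Ioc 0 (Real.pi/2)) volume := by
    apply Integrable.add
    · exact ((intervalIntegrable_rpow' (by norm_num : (-1:ℝ) < -(1/2))).const_mul 2 :
        IntervalIntegrable _ volume 0 (Real.pi/2)).1
    · exact integrableOn_const measure_Ioc_lt_top.ne
  apply Integrable.mono hmaj (LInt_measurable.aestronglyMeasurable.restrict)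
  rw [ae_restrict_iff' measurableSet_Ioc]
  apply Filter.Eventually.of_forall
  intro t ht
  have hpi2 : Real.pi / 2 ≤ 2 := by nlinarith [Real.pi_le_four]
  have ht0 : 0 < t := ht.1
  have ht2 : t ≤ 2 := le_trans ht.2 hpi2
  have hsin : t ≤ 2 * Real.sin t := sin_lower ht0 ht.2
  have hsinpos : 0 < 2 * Real.sin t := lt_of_lt_of_le ht0 hsin
  have hlow : Real.log t ≤ LInt t := by
    unfold LInt
    rw [abs_of_pos hsinpos]
    exact Real.log_le_log ht0 hsin
  have hup : LInt t ≤ Real.log 2 := LInt_le t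
  have habs : |LInt t| ≤ |Real.log t| + Real.log 2 := by
    rcases le_total 0 (LInt t) with h | h
    · rw [abs_of_nonneg h]
      have := abs_nonneg (Real.log t)
      linarith
    · rw [abs_of_nonpos h]
      have h2' : -LInt t ≤ -Real.log t := by linarith
      have : -Real.log t ≤ |Real.log t| := neg_le_abs _
      have hl2 : (0:ℝ) ≤ Real.log 2 := Real.log_nonneg one_le_two
      linarith
  have hrw : ‖LInt t‖ = |LInt t| := rfl
  rw [Real.norm_eq_abs, Real.norm_eq_abs]
  calc |LInt t| ≤ |Real.log t| + Real.log 2 := habs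
    _ ≤ 2 * t ^ (-(1/2) : ℝ) + Real.log 2 := by linarith [abs_log_le ht0 ht2]
    _ ≤ |2 * t ^ (-(1/2) : ℝ) + Real.log 2| := le_abs_self _

lemma LInt_even (x : ℝ) : LInt (-x) = LInt x := by
  unfold LInt; rw [Real.sin_neg]; rw [mul_neg, abs_neg]

lemma LInt_intervalIntegrable (a b : ℝ) : IntervalIntegrable LInt volume a b := by
  have h1 : IntervalIntegrable LInt volume 0 (Real.pi/2) := by
    rw [intervalIntegrable_iff_integrableOn_Ioc_of_le (by positivity)]
    exact LInt_integrableOn_half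
  have hneg : IntervalIntegrable LInt volume (-(Real.pi/2)) 0 := by
    rw [IntervalIntegrable.iff_comp_neg]
    simp only [LInt_even, neg_neg, neg_zero]
    exact h1.symm
  have h2 : IntervalIntegrable LInt volume (-(Real.pi/2)) (Real.pi/2) := hneg.trans h1
  -- translates
  have hstep : ∀ n : ℤ, IntervalIntegrable LInt volume (-(Real.pi/2) + n * Real.pi)
      (Real.pi/2 + n * Real.pi) := by
    intro n
    have := h2.comp_sub_right (n * Real.pi)
    have heq : (fun x => LInt (x - n * Real.pi)) = LInt := by
      funext x
      exact (LInt_periodic.int_mul n).sub_eq x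
    rwa [heq] at this
  have hbig : ∀ n : ℕ, IntervalIntegrable LInt volume (-(Real.pi/2) - n * Real.pi)
      (Real.pi/2 + n * Real.pi) := by
    intro n
    induction n with
    | zero => simpa using h2
    | succ n ih =>
      have hleft : IntervalIntegrable LInt volume (-(Real.pi/2) - (n+1 : ℕ) * Real.pi)
          (-(Real.pi/2) - n * Real.pi) := by
        convert hstep (-(n+1) : ℤ) using 1
        · push_cast; ring
        · push_cast; ring
      have hright : IntervalIntegrable LInt volume (Real.pi/2 + n * Real.pi)
          (Real.pi/2 + (n+1 : ℕ) * Real.pi) := by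
        convert hstep ((n+1) : ℤ) using 1 <;> push_cast <;> ring
      exact (hleft.trans ih).trans hright
  obtain ⟨n, hn⟩ := exists_nat_ge ((max |a| |b|) / Real.pi)
  have hpi : (0:ℝ) < Real.pi := Real.pi_pos
  have hmax : max |a| |b| ≤ n * Real.pi := by
    rw [div_le_iff₀ hpi] at hn; linarith
  apply (hbig n).mono_set
  have hl : -(Real.pi/2) - n * Real.pi ≤ Real.pi/2 + n * Real.pi := by
    nlinarith [Real.pi_pos, Nat.cast_nonneg (α := ℝ) n]
  have hmem : ∀ x : ℝ, |x| ≤ n * Real.pi →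
      x ∈ Set.uIcc (-(Real.pi/2) - n*Real.pi) (Real.pi/2 + n*Real.pi) := by
    intro x hx
    rw [Set.uIcc_of_le hl]
    have := abs_le.1 hx
    constructor
    · linarith [Real.pi_pos]
    · linarith [Real.pi_pos]
  exact Set.uIcc_subset_uIcc (hmem a (le_trans (le_max_left _ _) hmax))
    (hmem b (le_trans (le_max_right _ _) hmax))


lemma Lob_continuous : Continuous Lob :=
  (intervalIntegral.continuous_primitive (fun a b => LInt_intervalIntegrable a b) 0).neg

lemma LInt_continuousAt {x : ℝ} (hx : Real.sin x ≠ 0) : ContinuousAt LInt x := by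
  have h2 : |2 * Real.sin x| ≠ 0 := by simp [hx]
  have hg : ContinuousAt (fun y => |2 * Real.sin y|) x :=
    ((continuous_const.mul Real.continuous_sin).abs).continuousAt
  exact ContinuousAt.comp (g := Real.log) (f := fun y => |2 * Real.sin y|)
    (Real.continuousAt_log h2) hg

lemma Lob_hasDerivAt {x : ℝ} (hx : Real.sin x ≠ 0) : HasDerivAt Lob (-(LInt x)) x := by
  have h := intervalIntegral.integral_hasDerivAt_right (LInt_intervalIntegrable 0 x)
    (LInt_measurable.stronglyMeasurable.stronglyMeasurableAtFilter)
    (LInt_continuousAt hx)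
  exact h.neg

lemma LInt_hasDerivAt {x : ℝ} (hx : Real.sin x ≠ 0) :
    HasDerivAt LInt (Real.cos x / Real.sin x) x := by
  have h2 : (2 : ℝ) * Real.sin x ≠ 0 := by simp [hx]
  have hinner : HasDerivAt (fun y => 2 * Real.sin y) (2 * Real.cos x) x :=
    (Real.hasDerivAt_sin x).const_mul 2
  have hlog := (Real.hasDerivAt_log h2).comp x hinner
  have heq : LInt = fun y => Real.log (2 * Real.sin y) := by
    funext y; rw [← Real.log_abs]; rfl
  rw [heq]
  convert hlog using 1
  · rfl
  · rfl
  · rfl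
  · rw [mul_comm, ← div_eq_mul_inv, mul_div_mul_left _ _ two_ne_zero]

lemma cot_lt_cot {x y : ℝ} (h0 : 0 < x) (hxy : x < y) (hy : y < Real.pi) :
    Real.cos y / Real.sin y < Real.cos x / Real.sin x := by
  have sx : 0 < Real.sin x := Real.sin_pos_of_pos_of_lt_pi h0 (lt_trans hxy hy)
  have sy : 0 < Real.sin y := Real.sin_pos_of_pos_of_lt_pi (lt_trans h0 hxy) hy
  rw [div_lt_div_iff₀ sy sx]
  have hs : 0 < Real.sin (y - x) :=
    Real.sin_pos_of_pos_of_lt_pi (by linarith) (by linarith)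
  rw [Real.sin_sub] at hs
  nlinarith

lemma cot_add_pos {a b : ℝ} (ha : 0 < a) (hb : 0 < b) (hab : a + b < Real.pi) :
    0 < Real.cos a / Real.sin a + Real.cos b / Real.sin b := by
  have sa : 0 < Real.sin a := Real.sin_pos_of_pos_of_lt_pi ha (by linarith)
  have sb : 0 < Real.sin b := Real.sin_pos_of_pos_of_lt_pi hb (by linarith)
  have hs : 0 < Real.sin (a + b) := Real.sin_pos_of_pos_of_lt_pi (by linarith) hab
  have heq : Real.cos a / Real.sin a + Real.cos b / Real.sin b
      = Real.sin (a + b) / (Real.sin a * Real.sin b) := by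
    rw [Real.sin_add]; field_simp; ring
  rw [heq]; positivity

lemma cot_period (Z : ℝ) : Real.cos Z / Real.sin Z = Real.cos (Z - Real.pi) / Real.sin (Z - Real.pi) := by
  rw [Real.cos_sub_pi, Real.sin_sub_pi, neg_div_neg_eq]

lemma LInt_tendsto_atBot : Tendsto LInt (𝓝[≠] (0:ℝ)) atBot := by
  have h1 : Tendsto (fun y => |2 * Real.sin y|) (𝓝[≠] (0:ℝ)) (𝓝[>] 0) := by
    rw [tendsto_nhdsWithin_iff]
    constructor
    · have hc : Continuous fun y => |2 * Real.sin y| :=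
        (continuous_const.mul Real.continuous_sin).abs
      have h0 := hc.tendsto 0
      simp only [Real.sin_zero, mul_zero, abs_zero] at h0
      exact h0.mono_left nhdsWithin_le_nhds
    · have hmem : Set.Ioo (-Real.pi) Real.pi ∈ (𝓝[≠] (0:ℝ)) :=
        nhdsWithin_le_nhds (Ioo_mem_nhds (by linarith [Real.pi_pos]) Real.pi_pos)
      filter_upwards [hmem, self_mem_nhdsWithin] with y hy hy0
      have hsy : Real.sin y ≠ 0 := by
        intro h
        exact hy0 ((Real.sin_eq_zero_iff_of_lt_of_lt hy.1 hy.2).1 h)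
      simpa using abs_pos.2 (mul_ne_zero two_ne_zero hsy)
  exact Real.tendsto_log_nhdsGT_zero.comp h1

lemma sin_neg_of_gt_pi {Z : ℝ} (h1 : Real.pi < Z) (h2 : Z < 2*Real.pi) : Real.sin Z < 0 := by
  have h := Real.sin_pos_of_pos_of_lt_pi (x := Z - Real.pi) (by linarith) (by linarith)
  rw [Real.sin_sub_pi] at h
  linarith

noncomputable def Gaux (U1 U2 U3 U4 V1 V2 V3 z : ℝ) : ℝ :=
  LInt z + LInt (V1 - z) + LInt (V2 - z) + LInt (V3 - z)
    - LInt (z - U1) - LInt (z - U2) - LInt (z - U3) - LInt (z - U4)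

lemma aux_main (U1 U2 U3 U4 V1 V2 V3 A B : ℝ) (F : ℝ → ℝ)
    (hF : ∀ Z, F Z = Lob (Z - U1) + Lob (Z - U2) + Lob (Z - U3) + Lob (Z - U4) +
        Lob (V1 - Z) + Lob (V2 - Z) + Lob (V3 - Z) - Lob Z)
    (hA : A = max (max U1 U2) (max U3 U4))
    (hB : B = min (min (min V1 V2) V3) (2 * Real.pi))
    (hU : ∀ U ∈ [U1, U2, U3, U4], Real.pi < U ∧ U < 2 * Real.pi)
    (hVU : ∀ U ∈ [U1, U2, U3, U4], ∀ V ∈ [V1, V2, V3], 0 < V - U ∧ V - U < Real.pi) :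
    StrictConcaveOn ℝ (Set.Ioo A B) F ∧
    ∃! Z₀ : ℝ, Z₀ ∈ Set.Ioo A B ∧ ∀ Z ∈ Set.Icc A B, F Z ≤ F Z₀ := by
  have hu1 := hU U1 (by simp); have hu2 := hU U2 (by simp)
  have hu3 := hU U3 (by simp); have hu4 := hU U4 (by simp)
  have hv11 := hVU U1 (by simp) V1 (by simp); have hv12 := hVU U1 (by simp) V2 (by simp)
  have hv13 := hVU U1 (by simp) V3 (by simp)
  have hv21 := hVU U2 (by simp) V1 (by simp); have hv22 := hVU U2 (by simp) V2 (by simp)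
  have hv23 := hVU U2 (by simp) V3 (by simp)
  have hv31 := hVU U3 (by simp) V1 (by simp); have hv32 := hVU U3 (by simp) V2 (by simp)
  have hv33 := hVU U3 (by simp) V3 (by simp)
  have hv41 := hVU U4 (by simp) V1 (by simp); have hv42 := hVU U4 (by simp) V2 (by simp)
  have hv43 := hVU U4 (by simp) V3 (by simp)
  have hAU1 : U1 ≤ A := by rw [hA]; exact le_trans (le_max_left _ _) (le_max_left _ _)
  have hAU2 : U2 ≤ A := by rw [hA]; exact le_trans (le_max_right _ _) (le_max_left _ _)
  have hAU3 : U3 ≤ A := by rw [hA]; exact le_trans (le_max_left _ _) (le_max_right _ _)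
  have hAU4 : U4 ≤ A := by rw [hA]; exact le_trans (le_max_right _ _) (le_max_right _ _)
  have hAcase : A = U1 ∨ A = U2 ∨ A = U3 ∨ A = U4 := by
    rcases max_choice (max U1 U2) (max U3 U4) with h | h
    · rcases max_choice U1 U2 with h' | h'
      · exact Or.inl (by rw [hA, h, h'])
      · exact Or.inr (Or.inl (by rw [hA, h, h']))
    · rcases max_choice U3 U4 with h' | h'
      · exact Or.inr (Or.inr (Or.inl (by rw [hA, h, h'])))
      · exact Or.inr (Or.inr (Or.inr (by rw [hA, h, h'])))
  have hpiA : Real.pi < A := lt_of_lt_of_le hu1.1 hAU1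
  have hA2pi : A < 2 * Real.pi := by
    rw [hA]; exact max_lt (max_lt hu1.2 hu2.2) (max_lt hu3.2 hu4.2)
  have hBV1 : B ≤ V1 := by
    rw [hB]; exact le_trans (min_le_left _ _) (le_trans (min_le_left _ _) (min_le_left _ _))
  have hBV2 : B ≤ V2 := by
    rw [hB]; exact le_trans (min_le_left _ _) (le_trans (min_le_left _ _) (min_le_right _ _))
  have hBV3 : B ≤ V3 := by
    rw [hB]; exact le_trans (min_le_left _ _) (min_le_right _ _)
  have hB2pi : B ≤ 2 * Real.pi := by rw [hB]; exact min_le_right _ _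
  have hAB : A < B := by
    rw [hB]
    refine lt_min (lt_min (lt_min ?_ ?_) ?_) hA2pi
    · rcases hAcase with h | h | h | h <;> rw [h] <;>
        linarith [hv11.1, hv21.1, hv31.1, hv41.1]
    · rcases hAcase with h | h | h | h <;> rw [h] <;>
        linarith [hv12.1, hv22.1, hv32.1, hv42.1]
    · rcases hAcase with h | h | h | h <;> rw [h] <;>
        linarith [hv13.1, hv23.1, hv33.1, hv43.1]
  -- continuity of F
  have hFeq : F = fun Z => Lob (Z - U1) + Lob (Z - U2) + Lob (Z - U3) + Lob (Z - U4) +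
      Lob (V1 - Z) + Lob (V2 - Z) + Lob (V3 - Z) - Lob Z := funext hF
  have hFcont : Continuous F := by
    rw [hFeq]
    exact ((((((((Lob_continuous.comp (continuous_sub_right U1)).add
      (Lob_continuous.comp (continuous_sub_right U2))).add
      (Lob_continuous.comp (continuous_sub_right U3))).add
      (Lob_continuous.comp (continuous_sub_right U4))).add
      (Lob_continuous.comp (continuous_const.sub continuous_id))).add
      (Lob_continuous.comp (continuous_const.sub continuous_id))).add
      (Lob_continuous.comp (continuous_const.sub continuous_id))).sub Lob_continuous)
  -- derivative of F on Ioo A B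
  have hFderiv : ∀ z ∈ Set.Ioo A B, HasDerivAt F (Gaux U1 U2 U3 U4 V1 V2 V3 z) z := by
    rintro z ⟨hzA, hzB⟩
    have hs1 : Real.sin (z - U1) ≠ 0 :=
      (Real.sin_pos_of_pos_of_lt_pi (by linarith) (by linarith [hv11.2])).ne'
    have hs2 : Real.sin (z - U2) ≠ 0 :=
      (Real.sin_pos_of_pos_of_lt_pi (by linarith) (by linarith [hv21.2])).ne'
    have hs3 : Real.sin (z - U3) ≠ 0 :=
      (Real.sin_pos_of_pos_of_lt_pi (by linarith) (by linarith [hv31.2])).ne'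
    have hs4 : Real.sin (z - U4) ≠ 0 :=
      (Real.sin_pos_of_pos_of_lt_pi (by linarith) (by linarith [hv41.2])).ne'
    have hsv1 : Real.sin (V1 - z) ≠ 0 :=
      (Real.sin_pos_of_pos_of_lt_pi (by linarith) (by linarith [hv11.2])).ne'
    have hsv2 : Real.sin (V2 - z) ≠ 0 :=
      (Real.sin_pos_of_pos_of_lt_pi (by linarith) (by linarith [hv12.2])).ne'
    have hsv3 : Real.sin (V3 - z) ≠ 0 :=
      (Real.sin_pos_of_pos_of_lt_pi (by linarith) (by linarith [hv13.2])).ne'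
    have hsz : Real.sin z ≠ 0 := (sin_neg_of_gt_pi (by linarith) (by linarith)).ne
    have d1 : HasDerivAt (fun y => Lob (y - U1)) (-(LInt (z - U1))) z := by
      simpa [Function.comp_def] using (Lob_hasDerivAt hs1).comp z ((hasDerivAt_id z).sub_const U1)
    have d2 : HasDerivAt (fun y => Lob (y - U2)) (-(LInt (z - U2))) z := by
      simpa [Function.comp_def] using (Lob_hasDerivAt hs2).comp z ((hasDerivAt_id z).sub_const U2)
    have d3 : HasDerivAt (fun y => Lob (y - U3)) (-(LInt (z - U3))) z := by
      simpa [Function.comp_def] using (Lob_hasDerivAt hs3).comp z ((hasDerivAt_id z).sub_const U3)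
    have d4 : HasDerivAt (fun y => Lob (y - U4)) (-(LInt (z - U4))) z := by
      simpa [Function.comp_def] using (Lob_hasDerivAt hs4).comp z ((hasDerivAt_id z).sub_const U4)
    have e1 : HasDerivAt (fun y => Lob (V1 - y)) (LInt (V1 - z)) z := by
      simpa [Function.comp_def] using (Lob_hasDerivAt hsv1).comp z (HasDerivAt.const_sub V1 (hasDerivAt_id z))
    have e2 : HasDerivAt (fun y => Lob (V2 - y)) (LInt (V2 - z)) z := by
      simpa [Function.comp_def] using (Lob_hasDerivAt hsv2).comp z (HasDerivAt.const_sub V2 (hasDerivAt_id z))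
    have e3 : HasDerivAt (fun y => Lob (V3 - y)) (LInt (V3 - z)) z := by
      simpa [Function.comp_def] using (Lob_hasDerivAt hsv3).comp z (HasDerivAt.const_sub V3 (hasDerivAt_id z))
    have dz : HasDerivAt Lob (-(LInt z)) z := Lob_hasDerivAt hsz
    have hsum := ((((((d1.add d2).add d3).add d4).add e1).add e2).add e3).sub dz
    rw [hFeq]
    convert hsum using 1
    · rfl
    · rfl
    · rfl
    · simp only [Gaux]
      ring
  have hGderiv : ∀ z ∈ Set.Ioo A B, HasDerivAt (Gaux U1 U2 U3 U4 V1 V2 V3)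
      (Real.cos z / Real.sin z
        - Real.cos (V1 - z) / Real.sin (V1 - z) - Real.cos (V2 - z) / Real.sin (V2 - z)
        - Real.cos (V3 - z) / Real.sin (V3 - z)
        - Real.cos (z - U1) / Real.sin (z - U1) - Real.cos (z - U2) / Real.sin (z - U2)
        - Real.cos (z - U3) / Real.sin (z - U3) - Real.cos (z - U4) / Real.sin (z - U4)) z := by
    rintro z ⟨hzA, hzB⟩
    have hs1 : Real.sin (z - U1) ≠ 0 :=
      (Real.sin_pos_of_pos_of_lt_pi (by linarith) (by linarith [hv11.2])).ne'
    have hs2 : Real.sin (z - U2) ≠ 0 :=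
      (Real.sin_pos_of_pos_of_lt_pi (by linarith) (by linarith [hv21.2])).ne'
    have hs3 : Real.sin (z - U3) ≠ 0 :=
      (Real.sin_pos_of_pos_of_lt_pi (by linarith) (by linarith [hv31.2])).ne'
    have hs4 : Real.sin (z - U4) ≠ 0 :=
      (Real.sin_pos_of_pos_of_lt_pi (by linarith) (by linarith [hv41.2])).ne'
    have hsv1 : Real.sin (V1 - z) ≠ 0 :=
      (Real.sin_pos_of_pos_of_lt_pi (by linarith) (by linarith [hv11.2])).ne'
    have hsv2 : Real.sin (V2 - z) ≠ 0 :=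
      (Real.sin_pos_of_pos_of_lt_pi (by linarith) (by linarith [hv12.2])).ne'
    have hsv3 : Real.sin (V3 - z) ≠ 0 :=
      (Real.sin_pos_of_pos_of_lt_pi (by linarith) (by linarith [hv13.2])).ne'
    have hsz : Real.sin z ≠ 0 := (sin_neg_of_gt_pi (by linarith) (by linarith)).ne
    have d1 : HasDerivAt (fun y => LInt (y - U1)) (Real.cos (z - U1) / Real.sin (z - U1)) z := by
      simpa [Function.comp_def] using (LInt_hasDerivAt hs1).comp z ((hasDerivAt_id z).sub_const U1)
    have d2 : HasDerivAt (fun y => LInt (y - U2)) (Real.cos (z - U2) / Real.sin (z - U2)) z := by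
      simpa [Function.comp_def] using (LInt_hasDerivAt hs2).comp z ((hasDerivAt_id z).sub_const U2)
    have d3 : HasDerivAt (fun y => LInt (y - U3)) (Real.cos (z - U3) / Real.sin (z - U3)) z := by
      simpa [Function.comp_def] using (LInt_hasDerivAt hs3).comp z ((hasDerivAt_id z).sub_const U3)
    have d4 : HasDerivAt (fun y => LInt (y - U4)) (Real.cos (z - U4) / Real.sin (z - U4)) z := by
      simpa [Function.comp_def] using (LInt_hasDerivAt hs4).comp z ((hasDerivAt_id z).sub_const U4)
    have e1 : HasDerivAt (fun y => LInt (V1 - y)) (-(Real.cos (V1 - z) / Real.sin (V1 - z))) z := by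
      simpa [Function.comp_def] using (LInt_hasDerivAt hsv1).comp z (HasDerivAt.const_sub V1 (hasDerivAt_id z))
    have e2 : HasDerivAt (fun y => LInt (V2 - y)) (-(Real.cos (V2 - z) / Real.sin (V2 - z))) z := by
      simpa [Function.comp_def] using (LInt_hasDerivAt hsv2).comp z (HasDerivAt.const_sub V2 (hasDerivAt_id z))
    have e3 : HasDerivAt (fun y => LInt (V3 - y)) (-(Real.cos (V3 - z) / Real.sin (V3 - z))) z := by
      simpa [Function.comp_def] using (LInt_hasDerivAt hsv3).comp z (HasDerivAt.const_sub V3 (hasDerivAt_id z))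
    have dz : HasDerivAt LInt (Real.cos z / Real.sin z) z := LInt_hasDerivAt hsz
    have hsum := ((((((dz.add e1).add e2).add e3).sub d1).sub d2).sub d3).sub d4
    convert hsum using 1
    · rfl
    · rfl
    · rfl
    · ring
  have hconc : StrictConcaveOn ℝ (Set.Ioo A B) F := by
    apply strictConcaveOn_of_deriv2_neg (convex_Ioo A B) hFcont.continuousOn
    intro Z hZ
    rw [IsOpen.interior_eq isOpen_Ioo] at hZ
    show deriv (deriv F) Z < 0
    have hev : deriv F =ᶠ[𝓝 Z] Gaux U1 U2 U3 U4 V1 V2 V3 := by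
      filter_upwards [isOpen_Ioo.mem_nhds hZ] with y hy
      exact (hFderiv y hy).deriv
    rw [hev.deriv_eq, (hGderiv Z hZ).deriv]
    obtain ⟨hZA, hZB⟩ := hZ
    have p1 : 0 < Real.cos (Z - U1) / Real.sin (Z - U1)
        + Real.cos (V1 - Z) / Real.sin (V1 - Z) := by
      apply cot_add_pos (by linarith) (by linarith)
      have : Z - U1 + (V1 - Z) = V1 - U1 := by ring
      rw [this]; exact hv11.2
    have p2 : 0 < Real.cos (Z - U2) / Real.sin (Z - U2)
        + Real.cos (V2 - Z) / Real.sin (V2 - Z) := by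
      apply cot_add_pos (by linarith) (by linarith)
      have : Z - U2 + (V2 - Z) = V2 - U2 := by ring
      rw [this]; exact hv22.2
    have p3 : 0 < Real.cos (Z - U3) / Real.sin (Z - U3)
        + Real.cos (V3 - Z) / Real.sin (V3 - Z) := by
      apply cot_add_pos (by linarith) (by linarith)
      have : Z - U3 + (V3 - Z) = V3 - U3 := by ring
      rw [this]; exact hv33.2
    have p4 : Real.cos (Z - Real.pi) / Real.sin (Z - Real.pi)
        < Real.cos (Z - U4) / Real.sin (Z - U4) := by
      apply cot_lt_cot (by linarith) (by linarith [hu4.1]) (by linarith)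
    have hper := cot_period Z
    linarith
  -- limits of G at the endpoints
  have hcV : ∀ V : ℝ, Real.sin (V - A) ≠ 0 →
      Tendsto (fun z => LInt (V - z)) (𝓝 A) (𝓝 (LInt (V - A))) := by
    intro V hV
    have hg : ContinuousAt (fun z : ℝ => V - z) A := (continuous_const.sub continuous_id).continuousAt
    exact (ContinuousAt.comp (g := LInt) (f := fun z : ℝ => V - z)
      (LInt_continuousAt hV) hg).tendsto
  have hcU : ∀ U : ℝ, Real.sin (B - U) ≠ 0 →
      Tendsto (fun z => LInt (z - U)) (𝓝 B) (𝓝 (LInt (B - U))) := by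
    intro U hU
    have hg : ContinuousAt (fun z : ℝ => z - U) B := (continuous_sub_right U).continuousAt
    exact (ContinuousAt.comp (g := LInt) (f := fun z : ℝ => z - U)
      (LInt_continuousAt hU) hg).tendsto
  have hsA : Real.sin A ≠ 0 := (sin_neg_of_gt_pi hpiA hA2pi).ne
  have hsVA1 : Real.sin (V1 - A) ≠ 0 :=
    (Real.sin_pos_of_pos_of_lt_pi (by linarith) (by linarith [hv11.2])).ne'
  have hsVA2 : Real.sin (V2 - A) ≠ 0 :=
    (Real.sin_pos_of_pos_of_lt_pi (by linarith) (by linarith [hv12.2])).ne'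
  have hsVA3 : Real.sin (V3 - A) ≠ 0 :=
    (Real.sin_pos_of_pos_of_lt_pi (by linarith) (by linarith [hv13.2])).ne'
  have hsBU1 : Real.sin (B - U1) ≠ 0 :=
    (Real.sin_pos_of_pos_of_lt_pi (by linarith) (by linarith [hv11.2])).ne'
  have hsBU2 : Real.sin (B - U2) ≠ 0 :=
    (Real.sin_pos_of_pos_of_lt_pi (by linarith) (by linarith [hv21.2])).ne'
  have hsBU3 : Real.sin (B - U3) ≠ 0 :=
    (Real.sin_pos_of_pos_of_lt_pi (by linarith) (by linarith [hv31.2])).ne'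
  have hsBU4 : Real.sin (B - U4) ≠ 0 :=
    (Real.sin_pos_of_pos_of_lt_pi (by linarith) (by linarith [hv41.2])).ne'
  have htopA : Tendsto (Gaux U1 U2 U3 U4 V1 V2 V3) (𝓝[>] A) atTop := by
    have hbound : ∀ z, (LInt z + LInt (V1 - z) + LInt (V2 - z) + LInt (V3 - z)
        - 3 * Real.log 2) + -LInt (z - A) ≤ Gaux U1 U2 U3 U4 V1 V2 V3 z := by
      intro z
      rcases hAcase with h | h | h | h <;> rw [h] <;> simp only [Gaux] <;>
        linarith [LInt_le (z - U1), LInt_le (z - U2), LInt_le (z - U3), LInt_le (z - U4)]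
    have hmapA : Tendsto (fun z => z - A) (𝓝[>] A) (𝓝[≠] (0:ℝ)) := by
      rw [tendsto_nhdsWithin_iff]
      constructor
      · have h0 : Tendsto (fun z : ℝ => z - A) (𝓝 A) (𝓝 0) := by
          simpa using ((continuous_sub_right A).tendsto A)
        exact h0.mono_left nhdsWithin_le_nhds
      · filter_upwards [self_mem_nhdsWithin] with z hz
        simpa [Set.mem_compl_iff, sub_eq_zero] using ne_of_gt hz
    have h1 : Tendsto (fun z => -LInt (z - A)) (𝓝[>] A) atTop :=
      tendsto_neg_atBot_atTop.comp (LInt_tendsto_atBot.comp hmapA)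
    have h2 : Tendsto (fun z => LInt z + LInt (V1 - z) + LInt (V2 - z) + LInt (V3 - z)
        - 3 * Real.log 2) (𝓝[>] A)
        (𝓝 (LInt A + LInt (V1 - A) + LInt (V2 - A) + LInt (V3 - A) - 3 * Real.log 2)) := by
      apply Tendsto.mono_left ?_ nhdsWithin_le_nhds
      exact ((((LInt_continuousAt hsA).tendsto.add (hcV V1 hsVA1)).add
        (hcV V2 hsVA2)).add (hcV V3 hsVA3)).sub tendsto_const_nhds
    exact tendsto_atTop_mono hbound (h2.add_atTop h1)
  have htopB : Tendsto (Gaux U1 U2 U3 U4 V1 V2 V3) (𝓝[<] B) atBot := by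
    have h2 : Tendsto (fun z => 3 * Real.log 2 - LInt (z - U1) - LInt (z - U2)
        - LInt (z - U3) - LInt (z - U4)) (𝓝[<] B)
        (𝓝 (3 * Real.log 2 - LInt (B - U1) - LInt (B - U2) - LInt (B - U3) - LInt (B - U4))) := by
      apply Tendsto.mono_left ?_ nhdsWithin_le_nhds
      exact ((((tendsto_const_nhds.sub (hcU U1 hsBU1)).sub (hcU U2 hsBU2)).sub
        (hcU U3 hsBU3)).sub (hcU U4 hsBU4))
    rcases le_total (min (min V1 V2) V3) (2 * Real.pi) with hcase | hcase
    · have hBeq : B = min (min V1 V2) V3 := by rw [hB]; exact min_eq_left hcase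
      have hBcase : B = V1 ∨ B = V2 ∨ B = V3 := by
        rcases min_choice (min V1 V2) V3 with h | h
        · rcases min_choice V1 V2 with h' | h'
          · exact Or.inl (by rw [hBeq, h, h'])
          · exact Or.inr (Or.inl (by rw [hBeq, h, h']))
        · exact Or.inr (Or.inr (by rw [hBeq, h]))
      have hbound : ∀ z, Gaux U1 U2 U3 U4 V1 V2 V3 z ≤
          (3 * Real.log 2 - LInt (z - U1) - LInt (z - U2) - LInt (z - U3) - LInt (z - U4))
          + LInt (B - z) := by
        intro z
        rcases hBcase with h | h | h <;> rw [h] <;> simp only [Gaux] <;>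
          linarith [LInt_le z, LInt_le (V1 - z), LInt_le (V2 - z), LInt_le (V3 - z)]
      have hmapB : Tendsto (fun z => B - z) (𝓝[<] B) (𝓝[≠] (0:ℝ)) := by
        rw [tendsto_nhdsWithin_iff]
        constructor
        · have h0 : Tendsto (fun z : ℝ => B - z) (𝓝 B) (𝓝 0) := by
            simpa using (show Tendsto (fun z : ℝ => B - z) (𝓝 B) (𝓝 (B - B)) from
              (continuous_const.sub continuous_id).tendsto B)
          exact h0.mono_left nhdsWithin_le_nhds
        · filter_upwards [self_mem_nhdsWithin] with z hz
          simpa [Set.mem_compl_iff, sub_eq_zero] using ne_of_gt (hz : z < B)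
      have h1 : Tendsto (fun z => LInt (B - z)) (𝓝[<] B) atBot :=
        LInt_tendsto_atBot.comp hmapB
      exact tendsto_atBot_mono hbound (h2.add_atBot h1)
    · have hBeq : B = 2 * Real.pi := by rw [hB]; exact min_eq_right hcase
      have hbound : ∀ z, Gaux U1 U2 U3 U4 V1 V2 V3 z ≤
          (3 * Real.log 2 - LInt (z - U1) - LInt (z - U2) - LInt (z - U3) - LInt (z - U4))
          + LInt z := by
        intro z
        simp only [Gaux]
        linarith [LInt_le (V1 - z), LInt_le (V2 - z), LInt_le (V3 - z)]
      have hmapB : Tendsto (fun z => z - 2 * Real.pi) (𝓝[<] B) (𝓝[≠] (0:ℝ)) := by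
        rw [tendsto_nhdsWithin_iff, hBeq]
        constructor
        · have h0 : Tendsto (fun z : ℝ => z - 2 * Real.pi) (𝓝 (2 * Real.pi)) (𝓝 0) := by
            simpa using ((continuous_sub_right (2 * Real.pi)).tendsto (2 * Real.pi))
          exact h0.mono_left nhdsWithin_le_nhds
        · filter_upwards [self_mem_nhdsWithin] with z hz
          simpa [Set.mem_compl_iff, sub_eq_zero] using ne_of_lt (hz : z < 2 * Real.pi)
      have hperiod : (LInt ∘ fun z => z - 2 * Real.pi) = LInt := by
        funext z
        have h2pi : Function.Periodic LInt ((2:ℤ) * Real.pi) := LInt_periodic.int_mul 2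
        have hz := h2pi.sub_eq z
        norm_num at hz
        simpa [Function.comp] using hz
      have h1 : Tendsto LInt (𝓝[<] B) atBot := by
        have hcomp := LInt_tendsto_atBot.comp hmapB
        rwa [hperiod] at hcomp
      exact tendsto_atBot_mono hbound (h2.add_atBot h1)
  -- maximum exists on the compact interval
  obtain ⟨Z₀, hZ₀Icc, hZ₀max⟩ :=
    isCompact_Icc.exists_isMaxOn (Set.nonempty_Icc.2 hAB.le) hFcont.continuousOn
  -- max is not attained at the endpoints
  have hexA : ∃ c ∈ Set.Icc A B, F A < F c := by
    have hev : ∀ᶠ z in 𝓝[>] A, 0 < Gaux U1 U2 U3 U4 V1 V2 V3 z :=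
      htopA.eventually_gt_atTop 0
    have hIoo : Set.Ioo A B ∈ 𝓝[>] A := Ioo_mem_nhdsGT_of_mem ⟨le_refl A, hAB⟩
    have hev' : {z | 0 < Gaux U1 U2 U3 U4 V1 V2 V3 z} ∩ Set.Ioo A B ∈ 𝓝[>] A :=
      Filter.inter_mem hev hIoo
    obtain ⟨c, hcA, hc⟩ := mem_nhdsGT_iff_exists_Ioo_subset.1 hev'
    have hcA' : A < c := hcA
    have hc'A : A < min c ((A + B) / 2) := lt_min hcA' (by linarith)
    have hc'B : min c ((A + B) / 2) < B := lt_of_le_of_lt (min_le_right _ _) (by linarith)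
    have hmono : StrictMonoOn F (Set.Icc A (min c ((A + B) / 2))) := by
      apply strictMonoOn_of_deriv_pos (convex_Icc _ _) (hFcont.continuousOn)
      intro z hz
      rw [interior_Icc] at hz
      have hzIoo : z ∈ Set.Ioo A B := ⟨hz.1, lt_trans hz.2 hc'B⟩
      rw [(hFderiv z hzIoo).deriv]
      exact (hc ⟨hz.1, lt_of_lt_of_le hz.2 (min_le_left _ _)⟩).1
    exact ⟨min c ((A + B) / 2), ⟨hc'A.le, hc'B.le⟩,
      hmono (Set.left_mem_Icc.2 hc'A.le) ⟨hc'A.le, le_refl _⟩ hc'A⟩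
  have hexB : ∃ c ∈ Set.Icc A B, F B < F c := by
    have hev : ∀ᶠ z in 𝓝[<] B, Gaux U1 U2 U3 U4 V1 V2 V3 z < 0 :=
      htopB.eventually_lt_atBot 0
    have hIoo : Set.Ioo A B ∈ 𝓝[<] B := Ioo_mem_nhdsLT_of_mem ⟨hAB, le_refl B⟩
    have hev' : {z | Gaux U1 U2 U3 U4 V1 V2 V3 z < 0} ∩ Set.Ioo A B ∈ 𝓝[<] B :=
      Filter.inter_mem hev hIoo
    obtain ⟨d, hdB, hd⟩ := mem_nhdsLT_iff_exists_Ioo_subset.1 hev'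
    have hdB' : d < B := hdB
    have hd'B : max d ((A + B) / 2) < B := max_lt hdB' (by linarith)
    have hd'A : A < max d ((A + B) / 2) := lt_of_lt_of_le (by linarith) (le_max_right _ _)
    have hanti : StrictAntiOn F (Set.Icc (max d ((A + B) / 2)) B) := by
      apply strictAntiOn_of_deriv_neg (convex_Icc _ _) (hFcont.continuousOn)
      intro z hz
      rw [interior_Icc] at hz
      have hzIoo : z ∈ Set.Ioo A B := ⟨lt_trans hd'A hz.1, hz.2⟩
      rw [(hFderiv z hzIoo).deriv]
      exact (hd ⟨lt_of_le_of_lt (le_max_left _ _) hz.1, hz.2⟩).1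
    exact ⟨max d ((A + B) / 2), ⟨hd'A.le, hd'B.le⟩,
      hanti ⟨le_refl _, hd'B.le⟩ (Set.right_mem_Icc.2 hd'B.le) hd'B⟩
  have hZ₀Ioo : Z₀ ∈ Set.Ioo A B := by
    obtain ⟨c, hcIcc, hcgt⟩ := hexA
    obtain ⟨d, hdIcc, hdgt⟩ := hexB
    constructor
    · rcases eq_or_lt_of_le hZ₀Icc.1 with h | h
      · exact absurd (hZ₀max hcIcc) (not_le.2 (h ▸ hcgt))
      · exact h
    · rcases eq_or_lt_of_le hZ₀Icc.2 with h | h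
      · exact absurd (hZ₀max hdIcc) (not_le.2 (h ▸ hdgt))
      · exact h
  refine ⟨hconc, Z₀, ⟨hZ₀Ioo, fun z hz => hZ₀max hz⟩, ?_⟩
  rintro y ⟨hyIoo, hymax⟩
  by_contra hne
  have hFy : F y = F Z₀ := le_antisymm (hZ₀max (Set.Ioo_subset_Icc_self hyIoo))
    (hymax Z₀ (Set.Ioo_subset_Icc_self hZ₀Ioo))
  have hmid := hconc.2 hyIoo hZ₀Ioo hne (by norm_num : (0:ℝ) < 1/2)
    (by norm_num : (0:ℝ) < 1/2) (by norm_num)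
  have hmem : (1/2 : ℝ) • y + (1/2 : ℝ) • Z₀ ∈ Set.Ioo A B :=
    hconc.1 hyIoo hZ₀Ioo (by norm_num) (by norm_num) (by norm_num)
  have hle : F ((1/2 : ℝ) • y + (1/2 : ℝ) • Z₀) ≤ F Z₀ :=
    hZ₀max (Set.Ioo_subset_Icc_self hmem)
  rw [hFy] at hmid
  simp only [smul_eq_mul] at hmid hle
  linarith

/-- strict concavity of Z ↦ F(Z,θ₁,…,θ₆) and existence of a unique interior
maximum point Z₀. -/
theorem F_strictConcave_unique_max (t1 t2 t3 t4 t5 t6 : ℝ)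
    (hU : ∀ U ∈ [(t1+t2+t3)/2, (t1+t5+t6)/2, (t2+t4+t6)/2, (t3+t4+t5)/2],
      Real.pi < U ∧ U < 2 * Real.pi)
    (hVU : ∀ U ∈ [(t1+t2+t3)/2, (t1+t5+t6)/2, (t2+t4+t6)/2, (t3+t4+t5)/2],
      ∀ V ∈ [(t1+t2+t4+t5)/2, (t1+t3+t4+t6)/2, (t2+t3+t5+t6)/2],
        0 < V - U ∧ V - U < Real.pi) :
    StrictConcaveOn ℝ
      (Set.Ioo (Umax t1 t2 t3 t4 t5 t6) (min (Vmin t1 t2 t3 t4 t5 t6) (2 * Real.pi)))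
      (fun Z => Ffun Z t1 t2 t3 t4 t5 t6) ∧
    ∃! Z₀ : ℝ,
      Z₀ ∈ Set.Ioo (Umax t1 t2 t3 t4 t5 t6) (min (Vmin t1 t2 t3 t4 t5 t6) (2 * Real.pi)) ∧
      ∀ Z ∈ Set.Icc (Umax t1 t2 t3 t4 t5 t6) (min (Vmin t1 t2 t3 t4 t5 t6) (2 * Real.pi)),
        Ffun Z t1 t2 t3 t4 t5 t6 ≤ Ffun Z₀ t1 t2 t3 t4 t5 t6 := by
  exact aux_main ((t1+t2+t3)/2) ((t1+t5+t6)/2) ((t2+t4+t6)/2) ((t3+t4+t5)/2)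
    ((t1+t2+t4+t5)/2) ((t1+t3+t4+t6)/2) ((t2+t3+t5+t6)/2)
    (Umax t1 t2 t3 t4 t5 t6) (min (Vmin t1 t2 t3 t4 t5 t6) (2 * Real.pi))
    (fun Z => Ffun Z t1 t2 t3 t4 t5 t6)
    (fun Z => rfl) rfl rfl hU hVU
end

section
/- Let r ≥ 3 be odd and let (n₁,…,n₆) be an r-admissible 6-tuple satisfying 0 ≤ Q_j − T_i ≤ (r−2)/2 for all i ∈ {1,…,4}, j ∈ {1,2,3}, and (r−2)/2 ≤ T_i ≤ r−2 for all i. For an integer z define S_z = (−1)^z {z+1}! / (∏_{i=1}^4 {z−T_i}! · ∏_{j=1}^3 {Q_j−z}!), a complex number computed at q = e^{2πi/r}. Then for every integer z with max_i T_i < z ≤ min(min_j Q_j, r−2), the quotient S_z / S_{z−1} is a positive real number; in particular all the terms S_z with max_i T_i ≤ z ≤ min(min_j Q_j, r−2) are nonzero and have the same sign (as complex numbers they are positive real multiples of one another). -/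
open Real Filter

noncomputable def qq (r : ℕ) : ℂ := Complex.exp (2 * Real.pi * Complex.I / r)

noncomputable def qint (r n : ℕ) : ℂ := qq r ^ n - (qq r)⁻¹ ^ n

noncomputable def qfact (r n : ℕ) : ℂ := ∏ k ∈ Finset.Icc 1 n, qint r k

def admTriple (r a b c : ℕ) : Prop :=
  a ≤ r - 2 ∧ b ≤ r - 2 ∧ c ≤ r - 2 ∧ Even (a + b + c) ∧ a + b + c ≤ 2 * r - 4 ∧
    a ≤ b + c ∧ b ≤ a + c ∧ c ≤ a + b

def adm6 (r n1 n2 n3 n4 n5 n6 : ℕ) : Prop :=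
  admTriple r n1 n2 n3 ∧ admTriple r n1 n5 n6 ∧ admTriple r n2 n4 n6 ∧ admTriple r n3 n4 n5

noncomputable def zetaR (r : ℕ) : ℝ := 2 * Real.sin (2 * Real.pi / r)

noncomputable def branchSqrt (x : ℝ) : ℂ :=
  if 0 ≤ x then (Real.sqrt x : ℂ) else Complex.I * (Real.sqrt (-x) : ℂ)

noncomputable def qDelta (r a b c : ℕ) : ℂ :=
  branchSqrt ((Complex.I * (zetaR r : ℂ) * qfact r ((a + b - c) / 2) *
      qfact r ((a + c - b) / 2) * qfact r ((b + c - a) / 2) /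
      qfact r ((a + b + c) / 2 + 1)).re)

noncomputable def sixjSum (r n1 n2 n3 n4 n5 n6 : ℕ) : ℂ :=
  ∑ z ∈ Finset.Icc
      (max (max ((n1+n2+n3)/2) ((n1+n5+n6)/2)) (max ((n2+n4+n6)/2) ((n3+n4+n5)/2)))
      (min (min ((n1+n2+n4+n5)/2) ((n1+n3+n4+n6)/2)) ((n2+n3+n5+n6)/2)),
    (-1 : ℂ) ^ z * qfact r (z + 1) /
      (qfact r (z - (n1+n2+n3)/2) * qfact r (z - (n1+n5+n6)/2) *
       qfact r (z - (n2+n4+n6)/2) * qfact r (z - (n3+n4+n5)/2) *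
       (qfact r ((n1+n2+n4+n5)/2 - z) * qfact r ((n1+n3+n4+n6)/2 - z) *
        qfact r ((n2+n3+n5+n6)/2 - z)))

noncomputable def sixj (r n1 n2 n3 n4 n5 n6 : ℕ) : ℂ :=
  ((zetaR r : ℂ))⁻¹ * Complex.I ^ (n1 + n2 + n3 + n4 + n5 + n6) *
    (qDelta r n1 n2 n3 * qDelta r n1 n5 n6 * qDelta r n2 n4 n6 * qDelta r n3 n4 n5) *
    sixjSum r n1 n2 n3 n4 n5 n6

lemma qfact_succ (r n : ℕ) : qfact r (n+1) = qfact r n * qint r (n+1) := by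
  unfold qfact
  rw [Finset.prod_Icc_succ_top (by omega)]

lemma qint_eq (r n : ℕ) (hr : 0 < r) :
    qint r n = Complex.I * ((2 * Real.sin (2 * Real.pi * n / r) : ℝ) : ℂ) := by
  have hrC : (r:ℂ) ≠ 0 := Nat.cast_ne_zero.mpr hr.ne'
  have harg : (n : ℂ) * (2 * Real.pi * Complex.I / r)
      = ((2 * Real.pi * n / r : ℝ) : ℂ) * Complex.I := by
    push_cast; field_simp
  have h1 : qq r ^ n = Complex.exp (((2 * Real.pi * n / r : ℝ) : ℂ) * Complex.I) := by
    rw [qq, ← Complex.exp_nat_mul, harg]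
  have h2 : (qq r)⁻¹ ^ n = Complex.exp (((-(2 * Real.pi * n / r) : ℝ) : ℂ) * Complex.I) := by
    rw [qq, ← Complex.exp_neg, ← Complex.exp_nat_mul]
    rw [show ((n:ℂ)) * -(2 * Real.pi * Complex.I / r)
        = -((n:ℂ) * (2 * Real.pi * Complex.I / r)) by ring, harg]
    push_cast; ring_nf
  rw [qint, h1, h2, Complex.exp_mul_I, Complex.exp_mul_I]
  rw [← Complex.ofReal_cos, ← Complex.ofReal_sin, ← Complex.ofReal_cos, ← Complex.ofReal_sin]
  rw [Real.cos_neg, Real.sin_neg]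
  push_cast
  ring

lemma sinp (r n : ℕ) (h1 : 1 ≤ n) (h2 : 2*n < r) : 0 < Real.sin (2 * Real.pi * n / r) := by
  have hr : (0:ℝ) < r := by exact_mod_cast (by omega : 0 < r)
  apply Real.sin_pos_of_pos_of_lt_pi
  · have hn : (0:ℝ) < (n:ℝ) := by exact_mod_cast h1
    positivity
  · rw [div_lt_iff₀ hr]
    have : (2*n : ℝ) < r := by exact_mod_cast h2
    nlinarith [Real.pi_pos]

lemma sinn (r n : ℕ) (h1 : r < 2*n) (h2 : n < r) : Real.sin (2 * Real.pi * n / r) < 0 := by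
  have hr : (0:ℝ) < r := by exact_mod_cast (by omega : 0 < r)
  have key : 0 < Real.sin (2 * Real.pi - 2 * Real.pi * n / r) := by
    apply Real.sin_pos_of_pos_of_lt_pi
    · have h : (n:ℝ) < r := by exact_mod_cast h2
      rw [sub_pos, div_lt_iff₀ hr]
      nlinarith [Real.pi_pos]
    · have h : (r:ℝ) < 2*n := by exact_mod_cast h1
      rw [sub_lt_iff_lt_add, ← sub_lt_iff_lt_add', lt_div_iff₀ hr]
      nlinarith [Real.pi_pos]
  rw [Real.sin_sub, Real.sin_two_pi, Real.cos_two_pi] at key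
  linarith

lemma qint_ne_zero (r n : ℕ) (hodd : Odd r) (h1 : 1 ≤ n) (h2 : n < r) : qint r n ≠ 0 := by
  have h0 : 0 < r := by omega
  rw [qint_eq r n h0]
  apply mul_ne_zero Complex.I_ne_zero
  rw [Complex.ofReal_ne_zero]
  rcases lt_trichotomy (2*n) r with h|h|h
  · exact ne_of_gt (by have := sinp r n h1 h; linarith)
  · exfalso; obtain ⟨k,hk⟩ := hodd; omega
  · exact ne_of_lt (by have := sinn r n h h2; linarith)

lemma qfact_ne_zero (r n : ℕ) (hodd : Odd r) (h : n < r) : qfact r n ≠ 0 := by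
  unfold qfact
  apply Finset.prod_ne_zero_iff.mpr
  intro k hk
  simp only [Finset.mem_Icc] at hk
  exact qint_ne_zero r k hodd hk.1 (by omega)

lemma quad_div (x1 x2 x3 x4 y1 y2 y3 y4 : ℝ) :
    -(Complex.I * (x1:ℂ) * (Complex.I * (x2:ℂ)) * (Complex.I * (x3:ℂ)) * (Complex.I * (x4:ℂ))) /
      (Complex.I * (y1:ℂ) * (Complex.I * (y2:ℂ)) * (Complex.I * (y3:ℂ)) * (Complex.I * (y4:ℂ))) =
    ((-(x1*x2*x3*x4) / (y1*y2*y3*y4) : ℝ) : ℂ) := by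
  have hI : (Complex.I:ℂ)^2 = -1 := Complex.I_sq
  have hnum : -(Complex.I * (x1:ℂ) * (Complex.I * (x2:ℂ)) * (Complex.I * (x3:ℂ)) *
      (Complex.I * (x4:ℂ))) = ((-(x1*x2*x3*x4) : ℝ) : ℂ) := by
    push_cast
    linear_combination (-(((x1:ℂ))*(x2:ℂ)*(x3:ℂ)*(x4:ℂ)) * (Complex.I^2 - 1)) * hI
  have hden : (Complex.I * (y1:ℂ) * (Complex.I * (y2:ℂ)) * (Complex.I * (y3:ℂ)) *
      (Complex.I * (y4:ℂ))) = ((y1*y2*y3*y4 : ℝ) : ℂ) := by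
    push_cast
    linear_combination ((((y1:ℂ))*(y2:ℂ)*(y3:ℂ)*(y4:ℂ)) * (Complex.I^2 - 1)) * hI
  rw [hnum, hden, ← Complex.ofReal_div]



set_option maxHeartbeats 1600000 in
/-- under the growth constraints, consecutive terms S_z of the sum defining the
quantum 6j-symbol have positive real ratio; in particular all terms in the range are nonzero
(and are positive real multiples of one another). -/
theorem sixj_terms_same_sign (r : ℕ) (hodd : Odd r) (hr : 3 ≤ r)
    (n1 n2 n3 n4 n5 n6 : ℕ) (hadm : adm6 r n1 n2 n3 n4 n5 n6)
    (T1 T2 T3 T4 Q1 Q2 Q3 : ℕ)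
    (hT1 : T1 = (n1 + n2 + n3) / 2) (hT2 : T2 = (n1 + n5 + n6) / 2)
    (hT3 : T3 = (n2 + n4 + n6) / 2) (hT4 : T4 = (n3 + n4 + n5) / 2)
    (hQ1 : Q1 = (n1 + n2 + n4 + n5) / 2) (hQ2 : Q2 = (n1 + n3 + n4 + n6) / 2)
    (hQ3 : Q3 = (n2 + n3 + n5 + n6) / 2)
    (hQT : ∀ T ∈ [T1, T2, T3, T4], ∀ Q ∈ [Q1, Q2, Q3], T ≤ Q ∧ 2 * (Q - T) ≤ r - 2)
    (hT : ∀ T ∈ [T1, T2, T3, T4], r - 2 ≤ 2 * T ∧ T ≤ r - 2)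
    (S : ℕ → ℂ)
    (hS : ∀ z : ℕ, S z = (-1 : ℂ) ^ z * qfact r (z + 1) /
      (qfact r (z - T1) * qfact r (z - T2) * qfact r (z - T3) * qfact r (z - T4) *
       (qfact r (Q1 - z) * qfact r (Q2 - z) * qfact r (Q3 - z)))) :
    (∀ z : ℕ, max (max T1 T2) (max T3 T4) < z → z ≤ min (min (min Q1 Q2) Q3) (r - 2) →
      (S z / S (z - 1)).im = 0 ∧ 0 < (S z / S (z - 1)).re) ∧
    (∀ z : ℕ, max (max T1 T2) (max T3 T4) ≤ z → z ≤ min (min (min Q1 Q2) Q3) (r - 2) →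
      S z ≠ 0 ∧ ∃ c : ℝ, 0 < c ∧ S z = (c : ℂ) * S (max (max T1 T2) (max T3 T4))) := by
  clear hadm hT1 hT2 hT3 hT4 hQ1 hQ2 hQ3
  clear n1 n2 n3 n4 n5 n6
  have h0 : 0 < r := by omega
  have hq11 := hQT T1 (by simp) Q1 (by simp)
  have hq12 := hQT T1 (by simp) Q2 (by simp)
  have hq13 := hQT T1 (by simp) Q3 (by simp)
  have hq21 := hQT T2 (by simp) Q1 (by simp)
  have hq31 := hQT T3 (by simp) Q1 (by simp)
  have hq41 := hQT T4 (by simp) Q1 (by simp)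
  have ht1 := hT T1 (by simp)
  set M := max (max T1 T2) (max T3 T4) with hM
  set B := min (min (min Q1 Q2) Q3) (r - 2) with hB
  have part1 : ∀ z : ℕ, M < z → z ≤ B →
      (S z / S (z - 1)).im = 0 ∧ 0 < (S z / S (z - 1)).re := by
    intro z hzM hzB
    have hzQ1 : z ≤ Q1 := by omega
    have hzQ2 : z ≤ Q2 := by omega
    have hzQ3 : z ≤ Q3 := by omega
    have hzr : z ≤ r - 2 := by omega
    have hT1z : T1 < z := by omega
    have hT2z : T2 < z := by omega
    have hT3z : T3 < z := by omega
    have hT4z : T4 < z := by omega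
    have hz1 : 1 ≤ z := by omega
    clear hzM hzB hM hB hQT hT
    -- nonzero facts
    have nf0 : qfact r z ≠ 0 := qfact_ne_zero r z hodd (by omega)
    have nf1 : qfact r (z - 1 - T1) ≠ 0 := qfact_ne_zero r _ hodd (by omega)
    have nf2 : qfact r (z - 1 - T2) ≠ 0 := qfact_ne_zero r _ hodd (by omega)
    have nf3 : qfact r (z - 1 - T3) ≠ 0 := qfact_ne_zero r _ hodd (by omega)
    have nf4 : qfact r (z - 1 - T4) ≠ 0 := qfact_ne_zero r _ hodd (by omega)
    have nfq1 : qfact r (Q1 - z) ≠ 0 := qfact_ne_zero r _ hodd (by omega)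
    have nfq2 : qfact r (Q2 - z) ≠ 0 := qfact_ne_zero r _ hodd (by omega)
    have nfq3 : qfact r (Q3 - z) ≠ 0 := qfact_ne_zero r _ hodd (by omega)
    have ni1 : qint r (z - T1) ≠ 0 := qint_ne_zero r _ hodd (by omega) (by omega)
    have ni2 : qint r (z - T2) ≠ 0 := qint_ne_zero r _ hodd (by omega) (by omega)
    have ni3 : qint r (z - T3) ≠ 0 := qint_ne_zero r _ hodd (by omega) (by omega)
    have ni4 : qint r (z - T4) ≠ 0 := qint_ne_zero r _ hodd (by omega) (by omega)
    have nia : qint r (z + 1) ≠ 0 := qint_ne_zero r _ hodd (by omega) (by omega)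
    have nib1 : qint r (Q1 - z + 1) ≠ 0 := qint_ne_zero r _ hodd (by omega) (by omega)
    have nib2 : qint r (Q2 - z + 1) ≠ 0 := qint_ne_zero r _ hodd (by omega) (by omega)
    have nib3 : qint r (Q3 - z + 1) ≠ 0 := qint_ne_zero r _ hodd (by omega) (by omega)
    -- rewriting lemmas
    have a1 : z - 1 + 1 = z := by omega
    have eA : qfact r (z + 1) = qfact r z * qint r (z + 1) := qfact_succ r z
    have eT1 : qfact r (z - T1) = qfact r (z - 1 - T1) * qint r (z - T1) := by
      have h : z - T1 = (z - 1 - T1) + 1 := by omega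
      rw [h, qfact_succ, ← h]
    have eT2 : qfact r (z - T2) = qfact r (z - 1 - T2) * qint r (z - T2) := by
      have h : z - T2 = (z - 1 - T2) + 1 := by omega
      rw [h, qfact_succ, ← h]
    have eT3 : qfact r (z - T3) = qfact r (z - 1 - T3) * qint r (z - T3) := by
      have h : z - T3 = (z - 1 - T3) + 1 := by omega
      rw [h, qfact_succ, ← h]
    have eT4 : qfact r (z - T4) = qfact r (z - 1 - T4) * qint r (z - T4) := by
      have h : z - T4 = (z - 1 - T4) + 1 := by omega
      rw [h, qfact_succ, ← h]
    have eQ1 : qfact r (Q1 - (z - 1)) = qfact r (Q1 - z) * qint r (Q1 - z + 1) := by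
      have h : Q1 - (z - 1) = (Q1 - z) + 1 := by omega
      rw [h, qfact_succ]
    have eQ2 : qfact r (Q2 - (z - 1)) = qfact r (Q2 - z) * qint r (Q2 - z + 1) := by
      have h : Q2 - (z - 1) = (Q2 - z) + 1 := by omega
      rw [h, qfact_succ]
    have eQ3 : qfact r (Q3 - (z - 1)) = qfact r (Q3 - z) * qint r (Q3 - z + 1) := by
      have h : Q3 - (z - 1) = (Q3 - z) + 1 := by omega
      rw [h, qfact_succ]
    have esgn : ((-1 : ℂ)) ^ z = (-1) ^ (z - 1) * (-1) := by
      conv_lhs => rw [← a1]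
      rw [pow_succ]
    have key : S z * (qint r (z-T1) * qint r (z-T2) * qint r (z-T3) * qint r (z-T4)) =
        -(qint r (z+1) * qint r (Q1-z+1) * qint r (Q2-z+1) * qint r (Q3-z+1)) * S (z-1) := by
      rw [hS z, hS (z-1), a1, eA, eT1, eT2, eT3, eT4, eQ1, eQ2, eQ3, esgn]
      rw [div_mul_eq_mul_div, ← mul_div_assoc,
        div_eq_div_iff (by apply_rules [mul_ne_zero]) (by apply_rules [mul_ne_zero])]
      ring
    have hS1 : S (z - 1) ≠ 0 := by
      rw [hS (z-1), a1]
      refine div_ne_zero (mul_ne_zero (pow_ne_zero _ (by norm_num)) nf0) ?_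
      rw [eQ1, eQ2, eQ3]
      exact mul_ne_zero (mul_ne_zero (mul_ne_zero (mul_ne_zero nf1 nf2) nf3) nf4)
        (mul_ne_zero (mul_ne_zero (mul_ne_zero nfq1 nib1) (mul_ne_zero nfq2 nib2))
          (mul_ne_zero nfq3 nib3))
    have hratio1 : S z / S (z-1) =
        -(qint r (z+1) * qint r (Q1-z+1) * qint r (Q2-z+1) * qint r (Q3-z+1)) /
        (qint r (z-T1) * qint r (z-T2) * qint r (z-T3) * qint r (z-T4)) := by
      rw [div_eq_div_iff hS1
        (mul_ne_zero (mul_ne_zero (mul_ne_zero ni1 ni2) ni3) ni4)]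
      linear_combination key
    set x1 := 2 * Real.sin (2 * Real.pi * ((z+1 : ℕ) : ℝ) / r) with hx1d
    set x2 := 2 * Real.sin (2 * Real.pi * ((Q1 - z + 1 : ℕ) : ℝ) / r) with hx2d
    set x3 := 2 * Real.sin (2 * Real.pi * ((Q2 - z + 1 : ℕ) : ℝ) / r) with hx3d
    set x4 := 2 * Real.sin (2 * Real.pi * ((Q3 - z + 1 : ℕ) : ℝ) / r) with hx4d
    set y1 := 2 * Real.sin (2 * Real.pi * ((z - T1 : ℕ) : ℝ) / r) with hy1d
    set y2 := 2 * Real.sin (2 * Real.pi * ((z - T2 : ℕ) : ℝ) / r) with hy2d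
    set y3 := 2 * Real.sin (2 * Real.pi * ((z - T3 : ℕ) : ℝ) / r) with hy3d
    set y4 := 2 * Real.sin (2 * Real.pi * ((z - T4 : ℕ) : ℝ) / r) with hy4d
    have hx1 : x1 < 0 := by
      rw [hx1d]; have := sinn r (z+1) (by omega) (by omega); linarith
    have hx2 : 0 < x2 := by
      rw [hx2d]; have := sinp r (Q1 - z + 1) (by omega) (by omega); linarith
    have hx3 : 0 < x3 := by
      rw [hx3d]; have := sinp r (Q2 - z + 1) (by omega) (by omega); linarith
    have hx4 : 0 < x4 := by
      rw [hx4d]; have := sinp r (Q3 - z + 1) (by omega) (by omega); linarith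
    have hy1 : 0 < y1 := by
      rw [hy1d]; have := sinp r (z - T1) (by omega) (by omega); linarith
    have hy2 : 0 < y2 := by
      rw [hy2d]; have := sinp r (z - T2) (by omega) (by omega); linarith
    have hy3 : 0 < y3 := by
      rw [hy3d]; have := sinp r (z - T3) (by omega) (by omega); linarith
    have hy4 : 0 < y4 := by
      rw [hy4d]; have := sinp r (z - T4) (by omega) (by omega); linarith
    have hratio2 : S z / S (z-1) = ((-(x1*x2*x3*x4) / (y1*y2*y3*y4) : ℝ) : ℂ) := by
      rw [hratio1, qint_eq r (z+1) h0, qint_eq r (Q1 - z + 1) h0, qint_eq r (Q2 - z + 1) h0,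
        qint_eq r (Q3 - z + 1) h0, qint_eq r (z - T1) h0, qint_eq r (z - T2) h0,
        qint_eq r (z - T3) h0, qint_eq r (z - T4) h0]
      exact quad_div x1 x2 x3 x4 y1 y2 y3 y4
    refine ⟨by rw [hratio2, Complex.ofReal_im], ?_⟩
    rw [hratio2, Complex.ofReal_re]
    apply div_pos
    · have h := mul_pos (mul_pos (mul_pos (neg_pos.mpr hx1) hx2) hx3) hx4
      nlinarith [h]
    · exact mul_pos (mul_pos (mul_pos hy1 hy2) hy3) hy4
  have hSne : ∀ z : ℕ, M ≤ z → z ≤ B → S z ≠ 0 := by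
    intro z hzM hzB
    rw [hS z]
    refine div_ne_zero (mul_ne_zero (pow_ne_zero _ (by norm_num))
      (qfact_ne_zero r _ hodd (by omega))) ?_
    exact mul_ne_zero (mul_ne_zero (mul_ne_zero (mul_ne_zero
      (qfact_ne_zero r _ hodd (by omega)) (qfact_ne_zero r _ hodd (by omega)))
      (qfact_ne_zero r _ hodd (by omega))) (qfact_ne_zero r _ hodd (by omega)))
      (mul_ne_zero (mul_ne_zero (qfact_ne_zero r _ hodd (by omega))
        (qfact_ne_zero r _ hodd (by omega))) (qfact_ne_zero r _ hodd (by omega)))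
  have part2 : ∀ z : ℕ, M ≤ z → z ≤ B → ∃ c : ℝ, 0 < c ∧ S z = (c:ℂ) * S M := by
    intro z hzM
    induction z, hzM using Nat.le_induction with
    | base => intro _; exact ⟨1, one_pos, by norm_num⟩
    | succ z hz ih =>
      intro hzB1
      have hzB : z ≤ B := by omega
      obtain ⟨c, hc, hSc⟩ := ih hzB
      have hSz : S z ≠ 0 := hSne z hz hzB
      have h1 := part1 (z+1) (by omega) hzB1
      simp only [Nat.add_sub_cancel] at h1
      set u := S (z+1) / S z with hud
      have hu : S (z+1) = u * S z := (div_mul_cancel₀ _ hSz).symm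
      have hureal : u = ((u.re : ℝ) : ℂ) := Complex.ext (by simp) (by simpa using h1.1)
      refine ⟨u.re * c, mul_pos h1.2 hc, ?_⟩
      rw [hu, hSc]
      conv_lhs => rw [hureal]
      push_cast
      ring
  exact ⟨part1, fun z hzM hzB => ⟨hSne z hzM hzB, part2 z hzM hzB⟩⟩
end
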